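/- arXiv:2307.12260 — 5 statements merged into one kernel-verified Lean document; each statement's English description precedes it below -/
import Mathlib

section
/- Let ω : [0,∞) → ℝ be continuous with ω(0)=0, and for x ≥ 0 let c_x denote the greatest convex minorant of ω on [0,x] and V_x(ω) = {t ∈ [0,x] : c_x(t) = ω(t)} its contact set. If 0 ≤ y < x and t ∈ V_x(ω) ∩ [0,y], then V_y(ω) ∩ [0,t] = V_x(ω) ∩ [0,t]. -/
open Set

/-- The greatest convex minorant of `f` on `[0,x]`, evaluated at `t`: the pointwise
supremum over all convex functions on `[0,x]` lying below `f` there. -/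
noncomputable def cvxMinorant (f : ℝ → ℝ) (x t : ℝ) : ℝ :=
  sSup {v : ℝ | ∃ g : ℝ → ℝ, ConvexOn ℝ (Icc 0 x) g ∧ (∀ s ∈ Icc 0 x, g s ≤ f s) ∧ g t = v}

/-- The contact set `V_x(f)` of the greatest convex minorant of `f` on `[0,x]`. -/
def contactSet (f : ℝ → ℝ) (x : ℝ) : Set ℝ :=
  {t ∈ Icc 0 x | cvxMinorant f x t = f t}

namespace CvxAux

variable {ω : ℝ → ℝ}

lemma bddAbove_set {x t : ℝ} (ht : t ∈ Icc (0:ℝ) x) :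
    BddAbove {v : ℝ | ∃ g : ℝ → ℝ, ConvexOn ℝ (Icc 0 x) g ∧ (∀ s ∈ Icc 0 x, g s ≤ ω s) ∧ g t = v} := by
  refine ⟨ω t, ?_⟩
  rintro v ⟨g, _, hle, rfl⟩
  exact hle t ht

lemma nonempty_set (hcont : ContinuousOn ω (Ici 0)) {x : ℝ} (hx : 0 ≤ x) (t : ℝ) :
    Set.Nonempty {v : ℝ | ∃ g : ℝ → ℝ, ConvexOn ℝ (Icc 0 x) g ∧ (∀ s ∈ Icc 0 x, g s ≤ ω s) ∧ g t = v} := by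
  obtain ⟨z, hz, hmin⟩ := isCompact_Icc.exists_isMinOn (nonempty_Icc.2 hx)
    (hcont.mono Icc_subset_Ici_self)
  exact ⟨ω z, fun _ => ω z, convexOn_const _ (convex_Icc 0 x),
    fun s hs => isMinOn_iff.mp hmin s hs, rfl⟩

lemma le_minorant {x t : ℝ} (ht : t ∈ Icc (0:ℝ) x) {g : ℝ → ℝ}
    (hg : ConvexOn ℝ (Icc 0 x) g) (hle : ∀ s ∈ Icc 0 x, g s ≤ ω s) :
    g t ≤ cvxMinorant ω x t :=
  le_csSup (bddAbove_set ht) ⟨g, hg, hle, rfl⟩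

lemma minorant_le (hcont : ContinuousOn ω (Ici 0)) {x t : ℝ} (ht : t ∈ Icc (0:ℝ) x) :
    cvxMinorant ω x t ≤ ω t := by
  refine csSup_le (nonempty_set hcont (ht.1.trans ht.2) t) ?_
  rintro v ⟨g, _, hle, rfl⟩
  exact hle t ht

lemma convexOn_minorant (hcont : ContinuousOn ω (Ici 0)) {x : ℝ} (hx : 0 ≤ x) :
    ConvexOn ℝ (Icc 0 x) (cvxMinorant ω x) := by
  refine ⟨convex_Icc _ _, fun p hp q hq a b ha hb hab => ?_⟩
  refine csSup_le (nonempty_set hcont hx _) ?_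
  rintro v ⟨g, hg, hle, rfl⟩
  calc g (a • p + b • q) ≤ a • g p + b • g q := hg.2 hp hq ha hb hab
    _ ≤ a • cvxMinorant ω x p + b • cvxMinorant ω x q := by
        simp only [smul_eq_mul]
        have h1 : g p ≤ cvxMinorant ω x p := le_minorant hp hg hle
        have h2 : g q ≤ cvxMinorant ω x q := le_minorant hq hg hle
        nlinarith

/-- Monotonicity in the domain: the minorant over a larger interval is smaller. -/
lemma dom_mono (hcont : ContinuousOn ω (Ici 0)) {y x t : ℝ} (hy : 0 ≤ y) (hyx : y ≤ x)
    (ht : t ∈ Icc (0:ℝ) y) : cvxMinorant ω x t ≤ cvxMinorant ω y t := by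
  refine le_minorant ht ((convexOn_minorant hcont (hy.trans hyx)).subset
    (Icc_subset_Icc_right hyx) (convex_Icc _ _)) ?_
  intro s hs
  exact minorant_le hcont (Icc_subset_Icc_right hyx hs)

/-- Gluing a convex function `f` on `[0,t]` with a convex function `g` on `[0,x]`
at a point `t` where they agree and `g ≤ f` on `[0,t]` yields a convex function. -/
lemma glue_convex {t x : ℝ} {f g : ℝ → ℝ} (_ht0 : 0 ≤ t) (htx : t ≤ x)
    (hf : ConvexOn ℝ (Icc 0 t) f) (hg : ConvexOn ℝ (Icc 0 x) g)
    (hft : f t = g t) (hfg : ∀ s ∈ Icc (0:ℝ) t, g s ≤ f s) :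
    ConvexOn ℝ (Icc 0 x) (fun u => if u ≤ t then f u else g u) := by
  refine convexOn_of_slope_mono_adjacent (convex_Icc _ _) ?_
  intro a b u ha hu hab hbu
  have hau : a < u := hab.trans hbu
  have hb0 : (0:ℝ) ≤ b := ha.1.trans hab.le
  have hbx : b ≤ x := hbu.le.trans hu.2
  by_cases hut : u ≤ t
  · -- everything in [0, t]
    have hat : a ≤ t := hau.le.trans hut
    have hbt : b ≤ t := hbu.le.trans hut
    simp only [if_pos hat, if_pos hbt, if_pos hut]
    exact hf.slope_mono_adjacent ⟨ha.1, hat⟩ ⟨ha.1.trans hau.le, hut⟩ hab hbu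
  push_neg at hut
  by_cases hta : t ≤ a
  · -- everything in [t, x]
    have hifa : (if a ≤ t then f a else g a) = g a := by
      by_cases h' : a ≤ t
      · rw [if_pos h', le_antisymm h' hta, hft]
      · rw [if_neg h']
    have hbn : ¬ b ≤ t := by linarith
    simp only [hifa, if_neg hbn, if_neg (not_le.2 hut)]
    exact hg.slope_mono_adjacent ha hu hab hbu
  push_neg at hta  -- a < t < u
  have hax : a ∈ Icc (0:ℝ) x := ⟨ha.1, hta.le.trans htx⟩
  have hga : g a ≤ f a := hfg a ⟨ha.1, hta.le⟩
  by_cases htb : t ≤ b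
  · -- values : f a, g b, g u  (with f/g agreeing if b = t)
    have hifb : (if b ≤ t then f b else g b) = g b := by
      by_cases h' : b ≤ t
      · rw [if_pos h', le_antisymm h' htb, hft]
      · rw [if_neg h']
    simp only [if_pos hta.le, hifb, if_neg (not_le.2 hut)]
    -- goal : (g b - f a)/(b-a) ≤ (g u - g b)/(u-b)
    have key := hg.slope_mono_adjacent hax hu hab hbu
    rw [div_le_div_iff₀ (by linarith) (by linarith)] at key ⊢
    nlinarith [mul_nonneg (sub_nonneg.2 hga) (sub_pos.2 hbu).le]
  push_neg at htb  -- a < b < t < u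
  have hbt : b ∈ Icc (0:ℝ) t := ⟨hb0, htb.le⟩
  have hgb : g b ≤ f b := hfg b hbt
  have ht0' : (0:ℝ) ≤ t := hb0.trans htb.le
  simp only [if_pos hta.le, if_pos htb.le, if_neg (not_le.2 hut)]
  -- goal : (f b - f a)/(b-a) ≤ (g u - f b)/(u-b)
  have key1 := hf.slope_mono_adjacent (s := Icc (0:ℝ) t) (x := a) (y := b) (z := t) ⟨ha.1, hta.le⟩ ⟨ht0', le_refl t⟩ hab htb
  have key2 := hg.slope_mono_adjacent (s := Icc (0:ℝ) x) ⟨hb0, hbx⟩ hu htb hut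
  rw [div_le_div_iff₀ (by linarith) (by linarith)] at key1
  rw [div_le_div_iff₀ (by linarith) (by linarith)] at key2
  rw [hft] at key1
  -- key1 : (f b - f a) * (t - b) ≤ (g t - f b) * (b - a)
  -- key2 : (g t - g b) * (u - t) ≤ (g u - g t) * (t - b)
  have key3 : (g t - f b) * (u - b) ≤ (g u - f b) * (t - b) := by
    nlinarith [mul_nonneg (sub_nonneg.2 hgb) (sub_pos.2 hut).le]
  rw [div_le_div_iff₀ (by linarith) (by linarith)]
  have htbpos : (0:ℝ) < t - b := by linarith
  have hK : (f b - f a) * (u - b) * (t - b) ≤ (g u - f b) * (b - a) * (t - b) := by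
    nlinarith [mul_le_mul_of_nonneg_right key1 (by linarith : (0:ℝ) ≤ u - b),
      mul_le_mul_of_nonneg_right key3 (by linarith : (0:ℝ) ≤ b - a)]
  exact (mul_le_mul_iff_of_pos_right htbpos).mp hK

/-- At a contact point `t` of the minorant on `[0,x]`, the minorants on `[0,x]` and
`[0,t]` agree on `[0,t]`. -/
lemma minorant_eqOn (hcont : ContinuousOn ω (Ici 0)) {x t : ℝ} (ht0 : 0 ≤ t) (htx : t ≤ x)
    (hc : cvxMinorant ω x t = ω t) {s : ℝ} (hs : s ∈ Icc (0:ℝ) t) :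
    cvxMinorant ω x s = cvxMinorant ω t s := by
  have hx0 : 0 ≤ x := ht0.trans htx
  have hle : cvxMinorant ω x s ≤ cvxMinorant ω t s := dom_mono hcont ht0 htx hs
  have hdt : cvxMinorant ω t t = cvxMinorant ω x t := by
    refine le_antisymm ?_ (dom_mono hcont ht0 htx ⟨ht0, le_refl t⟩)
    rw [hc]
    exact minorant_le hcont ⟨ht0, le_refl t⟩
  have hfg : ∀ u ∈ Icc (0:ℝ) t, cvxMinorant ω x u ≤ cvxMinorant ω t u :=
    fun u hu => dom_mono hcont ht0 htx hu
  have hglue := glue_convex ht0 htx (convexOn_minorant hcont ht0) (convexOn_minorant hcont hx0)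
    hdt hfg
  have hmin : ∀ u ∈ Icc (0:ℝ) x,
      (if u ≤ t then cvxMinorant ω t u else cvxMinorant ω x u) ≤ ω u := by
    intro u hu
    by_cases h' : u ≤ t
    · rw [if_pos h']; exact minorant_le hcont ⟨hu.1, h'⟩
    · rw [if_neg h']; exact minorant_le hcont hu
  have h2 := le_minorant (ω := ω) (t := s) ⟨hs.1, hs.2.trans htx⟩ hglue hmin
  rw [if_pos hs.2] at h2
  exact le_antisymm hle h2

end CvxAux

/-- If `0 ≤ y < x` and `t ∈ V_x(ω) ∩ [0,y]`, then
`V_y(ω) ∩ [0,t] = V_x(ω) ∩ [0,t]`. -/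
theorem convex_minorants_intersection (ω : ℝ → ℝ)
    (hcont : ContinuousOn ω (Ici 0)) (h0 : ω 0 = 0)
    (x y t : ℝ) (hy : 0 ≤ y) (hyx : y < x)
    (ht : t ∈ contactSet ω x) (hty : t ≤ y) :
    contactSet ω y ∩ Icc 0 t = contactSet ω x ∩ Icc 0 t := by
  obtain ⟨⟨ht0, htx⟩, htc⟩ := ht
  have hcyt : cvxMinorant ω y t = ω t := by
    refine le_antisymm (CvxAux.minorant_le hcont ⟨ht0, hty⟩) ?_
    rw [← htc]
    exact CvxAux.dom_mono hcont hy hyx.le ⟨ht0, hty⟩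
  have hxeq : ∀ s ∈ Icc (0:ℝ) t, cvxMinorant ω x s = cvxMinorant ω t s :=
    fun s hs => CvxAux.minorant_eqOn hcont ht0 htx htc hs
  have hyeq : ∀ s ∈ Icc (0:ℝ) t, cvxMinorant ω y s = cvxMinorant ω t s :=
    fun s hs => CvxAux.minorant_eqOn hcont ht0 hty hcyt hs
  ext s
  simp only [contactSet, mem_inter_iff, mem_sep_iff, mem_Icc]
  constructor
  · rintro ⟨⟨⟨hs0, _⟩, hcy⟩, hst⟩
    refine ⟨⟨⟨hs0, by linarith [hst.2]⟩, ?_⟩, hst⟩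
    rw [hxeq s ⟨hs0, hst.2⟩, ← hyeq s ⟨hs0, hst.2⟩]
    exact hcy
  · rintro ⟨⟨⟨hs0, _⟩, hcx⟩, hst⟩
    refine ⟨⟨⟨hs0, by linarith [hst.2]⟩, ?_⟩, hst⟩
    rw [hyeq s ⟨hs0, hst.2⟩, ← hxeq s ⟨hs0, hst.2⟩]
    exact hcx
end

section
/- Fix λ ∈ ℝ and define the operator Ψ_λ on continuous functions f on an interval D ⊆ [0,∞) containing 0 by Ψ_λ f(t) = f(t) + λt − inf{f(s)+λs : s ∈ D, s ≤ t}. If for some λ ∈ ℝ and t ∈ D we have Ψ_λ f(t) = 0, then for all h ≥ 0 and s ≥ 0 with t+s ∈ D, Ψ_{λ−h} f(t+s) = Ψ_{−h}(S_t Ψ_λ f)(s), where S_t denotes the shift S_t g(s) = g(t+s). In particular Ψ_{λ−h} f(t) = 0 for all h ≥ 0. -/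
open Set

/-- The operator `Ψ_λ` on functions with domain `E`:
`Ψ_λ f (t) = f t + λ t − inf {f s + λ s : s ∈ E, s ≤ t}`. -/
noncomputable def Psi (E : Set ℝ) (l : ℝ) (g : ℝ → ℝ) (u : ℝ) : ℝ :=
  g u + l * u - sInf ((fun s => g s + l * s) '' {s ∈ E | s ≤ u})

lemma sInf_image_sub_const {A : Set ℝ} {q : ℝ → ℝ} (c : ℝ) (hA : A.Nonempty)
    (hb : BddBelow (q '' A)) :
    sInf ((fun x => q x - c) '' A) = sInf (q '' A) - c := by
  obtain ⟨b, hbb⟩ := hb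
  have hb' : BddBelow ((fun x => q x - c) '' A) := by
    refine ⟨b - c, ?_⟩
    rintro y ⟨x, hx, rfl⟩
    have := hbb (mem_image_of_mem q hx)
    show b - c ≤ q x - c
    linarith
  apply le_antisymm
  · have h1 : sInf ((fun x => q x - c) '' A) + c ≤ sInf (q '' A) := by
      apply le_csInf (hA.image q)
      rintro y ⟨x, hx, rfl⟩
      have : sInf ((fun x => q x - c) '' A) ≤ q x - c :=
        csInf_le hb' ⟨x, hx, rfl⟩
      linarith
    linarith
  · apply le_csInf (hA.image _)
    rintro y ⟨x, hx, rfl⟩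
    have : sInf (q '' A) ≤ q x := csInf_le ⟨b, hbb⟩ ⟨x, hx, rfl⟩
    show sInf (q '' A) - c ≤ q x - c
    linarith

lemma sInf_shear_at_min {a : ℝ} (ha : 0 ≤ a) {q : ℝ → ℝ} (hb : BddBelow (q '' Icc 0 a))
    (hmin : sInf (q '' Icc 0 a) = q a) {h : ℝ} (hh : 0 ≤ h) :
    sInf ((fun w => q w - h * w) '' Icc 0 a) = q a - h * a := by
  obtain ⟨b, hbb⟩ := hb
  have hb' : BddBelow ((fun w => q w - h * w) '' Icc 0 a) := by
    refine ⟨b - h * a, ?_⟩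
    rintro y ⟨x, ⟨hx0, hxa⟩, rfl⟩
    have h1 := hbb (mem_image_of_mem q ⟨hx0, hxa⟩)
    have h2 : h * x ≤ h * a := mul_le_mul_of_nonneg_left hxa hh
    show b - h * a ≤ q x - h * x
    linarith
  apply le_antisymm
  · exact csInf_le hb' ⟨a, ⟨ha, le_refl a⟩, rfl⟩
  · refine le_csInf ⟨_, mem_image_of_mem _ (⟨ha, le_refl a⟩ : a ∈ Icc 0 a)⟩ ?_
    rintro y ⟨x, ⟨hx0, hxa⟩, rfl⟩
    have h1 : sInf (q '' Icc 0 a) ≤ q x := csInf_le ⟨b, hbb⟩ ⟨x, ⟨hx0, hxa⟩, rfl⟩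
    have h2 : h * x ≤ h * a := mul_le_mul_of_nonneg_left hxa hh
    rw [hmin] at h1
    show q a - h * a ≤ q x - h * x
    linarith

/-- Composition property of the operators `Ψ_λ`: if `Ψ_λ f (t) = 0` then for all
`h ≥ 0` and `s ≥ 0` with `t + s ∈ D`,
`Ψ_{λ−h} f (t+s) = Ψ_{−h} (S_t Ψ_λ f) (s)` (where `S_t` is the shift by `t`, and the
shifted function lives on the shifted domain `{u ≥ 0 : t + u ∈ D}`).
In particular `Ψ_{λ−h} f (t) = 0` for all `h ≥ 0`. -/
theorem shear_composition (D : Set ℝ) (hD0 : (0 : ℝ) ∈ D) (hDpos : D ⊆ Ici 0)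
    (hDconn : D.OrdConnected) (f : ℝ → ℝ) (hf : ContinuousOn f D)
    (lam t : ℝ) (htD : t ∈ D) (hzero : Psi D lam f t = 0) :
    (∀ h ≥ (0 : ℝ), ∀ s ≥ (0 : ℝ), t + s ∈ D →
      Psi D (lam - h) f (t + s) =
        Psi {u : ℝ | 0 ≤ u ∧ t + u ∈ D} (-h) (fun u => Psi D lam f (t + u)) s) ∧
    (∀ h ≥ (0 : ℝ), Psi D (lam - h) f t = 0) := by
  have ht0 : 0 ≤ t := hDpos htD
  -- the truncated domain is an interval
  have domeq : ∀ u ∈ D, {s ∈ D | s ≤ u} = Icc 0 u := by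
    intro u hu
    ext x
    constructor
    · rintro ⟨hxD, hxu⟩; exact ⟨hDpos hxD, hxu⟩
    · rintro ⟨h0, h1⟩; exact ⟨hDconn.out hD0 hu ⟨h0, h1⟩, h1⟩
  -- continuity of the sheared function on subintervals of D
  have hGc : ∀ a b : ℝ, a ∈ D → b ∈ D →
      ContinuousOn (fun w => f w + lam * w) (Icc a b) := by
    intro a b ha hb
    have hsub : Icc a b ⊆ D := fun x hx => hDconn.out ha hb hx
    exact (hf.mono hsub).add ((continuous_const.mul continuous_id).continuousOn)
  have hbG : BddBelow ((fun w => f w + lam * w) '' Icc 0 t) :=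
    isCompact_Icc.bddBelow_image (hGc 0 t hD0 htD)
  have hMt : sInf ((fun w => f w + lam * w) '' Icc 0 t) = f t + lam * t := by
    have h0 := hzero
    unfold Psi at h0
    rw [domeq t htD] at h0
    linarith
  -- Part 2, proved directly
  have part2 : ∀ h ≥ (0 : ℝ), Psi D (lam - h) f t = 0 := by
    intro h hh
    unfold Psi
    rw [domeq t htD]
    have hfe : (fun w => f w + (lam - h) * w) = fun w => (f w + lam * w) - h * w := by
      funext w; ring
    rw [hfe, sInf_shear_at_min ht0 hbG hMt hh]
    ring
  refine ⟨?_, part2⟩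
  intro h hh s hs hts
  have hts0 : t ≤ t + s := le_add_of_nonneg_right hs
  have hIccD : Icc t (t + s) ⊆ D := fun x hx => hDconn.out htD hts hx
  -- the shifted function F and its running infimum N
  set F : ℝ → ℝ := fun u => f (t + u) + lam * (t + u) with hFdef
  set N : ℝ → ℝ := fun u => sInf (F '' Icc 0 u) with hNdef
  have hFc : ContinuousOn F (Icc 0 s) := by
    have hmap : MapsTo (fun u => t + u) (Icc 0 s) (Icc t (t + s)) := by
      intro x hx
      exact ⟨le_add_of_nonneg_right hx.1, add_le_add_right hx.2 t⟩
    exact (hGc t (t + s) htD hts).comp (continuous_add_left t).continuousOn hmap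
  have hbF : BddBelow (F '' Icc 0 s) := isCompact_Icc.bddBelow_image hFc
  have hbFu : ∀ u ∈ Icc (0:ℝ) s, BddBelow (F '' Icc 0 u) := by
    intro u hu
    exact hbF.mono (image_mono (Icc_subset_Icc_right hu.2))
  have hFne : ∀ u : ℝ, 0 ≤ u → (F '' Icc 0 u).Nonempty :=
    fun u hu => ⟨F 0, mem_image_of_mem F ⟨le_refl 0, hu⟩⟩
  -- reparametrization of images over [t, t+u]
  have hreparam : ∀ u : ℝ, (fun w => f w + lam * w) '' Icc t (t + u) = F '' Icc 0 u := by
    intro u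
    have h1 : Icc t (t + u) = (fun v => t + v) '' Icc 0 u := by
      rw [image_const_add_Icc, add_zero]
    rw [h1, image_image]
  -- N u ≤ F v for v ∈ [0, u]
  have hNleF : ∀ u ∈ Icc (0:ℝ) s, N u ≤ F u := by
    intro u hu
    exact csInf_le (hbFu u hu) (mem_image_of_mem F ⟨hu.1, le_refl u⟩)
  have hNmono : ∀ u ∈ Icc (0:ℝ) s, N s ≤ N u := by
    intro u hu
    exact csInf_le_csInf hbF (hFne u hu.1) (image_mono (Icc_subset_Icc_right hu.2))
  have hF0 : F 0 = f t + lam * t := by simp [hFdef]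
  -- splitting the infimum over [0, t+u]
  have hMsplit : ∀ u ∈ Icc (0:ℝ) s,
      sInf ((fun w => f w + lam * w) '' Icc 0 (t + u)) = N u := by
    intro u hu
    have hsplit : Icc (0:ℝ) (t + u) = Icc 0 t ∪ Icc t (t + u) :=
      (Icc_union_Icc_eq_Icc ht0 (le_add_of_nonneg_right hu.1)).symm
    have htuD : t + u ∈ D := hIccD ⟨le_add_of_nonneg_right hu.1, by linarith [hu.2]⟩
    rw [hsplit, image_union, csInf_union hbG ⟨f 0 + lam * 0, mem_image_of_mem _ ⟨le_refl 0, ht0⟩⟩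
      (isCompact_Icc.bddBelow_image (hGc t (t + u) htD htuD))
      (by rw [hreparam]; exact hFne u hu.1)]
    rw [hreparam, hMt]
    refine min_eq_right ?_
    calc N u ≤ F 0 := csInf_le (hbFu u hu) (mem_image_of_mem F ⟨le_refl 0, hu.1⟩)
      _ = f t + lam * t := hF0
  -- Psi D lam f (t+u) = F u - N u on [0,s]
  have hPsiEq : ∀ u ∈ Icc (0:ℝ) s, Psi D lam f (t + u) = F u - N u := by
    intro u hu
    have htuD : t + u ∈ D := hIccD ⟨le_add_of_nonneg_right hu.1, by linarith [hu.2]⟩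
    unfold Psi
    rw [domeq (t + u) htuD, hMsplit u hu]
  -- the truncated shifted domain is [0, s]
  have hdom' : {x ∈ {u : ℝ | 0 ≤ u ∧ t + u ∈ D} | x ≤ s} = Icc 0 s := by
    ext x
    constructor
    · rintro ⟨⟨hx0, _⟩, hxs⟩; exact ⟨hx0, hxs⟩
    · rintro ⟨hx0, hxs⟩
      exact ⟨⟨hx0, hIccD ⟨le_add_of_nonneg_right hx0, add_le_add_right hxs t⟩⟩, hxs⟩
  -- left-hand side computation
  have hfe : (fun w => f w + (lam - h) * w) = fun w => (f w + lam * w) - h * w := by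
    funext w; ring
  have hLsplit : Icc (0:ℝ) (t + s) = Icc 0 t ∪ Icc t (t + s) :=
    (Icc_union_Icc_eq_Icc ht0 hts0).symm
  set I : ℝ := sInf ((fun u => F u - h * u) '' Icc 0 s) with hIdef
  have hbFh : BddBelow ((fun u => F u - h * u) '' Icc 0 s) :=
    isCompact_Icc.bddBelow_image (hFc.sub ((continuous_const.mul continuous_id).continuousOn))
  have hInf1 : sInf ((fun w => (f w + lam * w) - h * w) '' Icc 0 t) = (f t + lam * t) - h * t :=
    sInf_shear_at_min ht0 hbG hMt hh
  have hInf2 : sInf ((fun w => (f w + lam * w) - h * w) '' Icc t (t + s)) = I - h * t := by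
    have h1 : Icc t (t + s) = (fun v => t + v) '' Icc 0 s := by
      rw [image_const_add_Icc, add_zero]
    rw [h1, image_image]
    have h2 : (fun v => (f (t + v) + lam * (t + v)) - h * (t + v)) =
        fun v => (F v - h * v) - h * t := by
      funext v; simp only [hFdef]; ring
    rw [h2, sInf_image_sub_const (h * t) (nonempty_Icc.mpr hs) hbFh]
  have hLHS : Psi D (lam - h) f (t + s) = F s - h * s - I := by
    unfold Psi
    have hb1 : BddBelow ((fun w => f w + lam * w - h * w) '' Icc 0 t) :=
      isCompact_Icc.bddBelow_image
        ((hGc 0 t hD0 htD).sub ((continuous_const.mul continuous_id).continuousOn))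
    have hb2 : BddBelow ((fun w => f w + lam * w - h * w) '' Icc t (t + s)) :=
      isCompact_Icc.bddBelow_image
        ((hGc t (t + s) htD hts).sub ((continuous_const.mul continuous_id).continuousOn))
    have hne1 : ((fun w => f w + lam * w - h * w) '' Icc 0 t).Nonempty :=
      ⟨_, mem_image_of_mem _ (⟨le_refl 0, ht0⟩ : (0:ℝ) ∈ Icc 0 t)⟩
    have hne2 : ((fun w => f w + lam * w - h * w) '' Icc t (t + s)).Nonempty :=
      ⟨_, mem_image_of_mem _ (⟨le_refl t, hts0⟩ : t ∈ Icc t (t + s))⟩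
    rw [domeq (t + s) hts, hfe, hLsplit, image_union, csInf_union hb1 hne1 hb2 hne2,
      hInf1, hInf2]
    have hmin : (f t + lam * t - h * t) ⊓ (I - h * t) = I - h * t := by
      refine min_eq_right ?_
      have : I ≤ F 0 - h * 0 := csInf_le hbFh (mem_image_of_mem _ ⟨le_refl 0, hs⟩)
      rw [hF0] at this
      linarith
    rw [hmin]
    simp only [hFdef]
    ring
  -- right-hand side computation
  set J : ℝ := sInf ((fun u => F u - N u - h * u) '' Icc 0 s) with hJdef
  have hbJ : BddBelow ((fun u => F u - N u - h * u) '' Icc 0 s) := by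
    refine ⟨-(h * s), ?_⟩
    rintro y ⟨u, hu, rfl⟩
    have h1 := hNleF u hu
    have h2 : h * u ≤ h * s := mul_le_mul_of_nonneg_left hu.2 hh
    show -(h * s) ≤ F u - N u - h * u
    linarith
  have hRHS : Psi {u : ℝ | 0 ≤ u ∧ t + u ∈ D} (-h) (fun u => Psi D lam f (t + u)) s =
      F s - N s - h * s - J := by
    rw [Psi, hdom']
    have himg : (fun x => (fun u => Psi D lam f (t + u)) x + (-h) * x) '' Icc 0 s =
        (fun u => F u - N u - h * u) '' Icc 0 s := by
      apply image_congr
      intro x hx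
      show Psi D lam f (t + x) + -h * x = F x - N x - h * x
      rw [hPsiEq x hx]
      ring
    rw [himg, hPsiEq s ⟨hs, le_refl s⟩]
    ring
  -- the key identity I = N s + J
  obtain ⟨w, hw, hNsw, hwmin⟩ :=
    isCompact_Icc.exists_sInf_image_eq_and_le (nonempty_Icc.mpr hs) hFc
  have hNs : N s = F w := hNsw
  have hkey : I = N s + J := by
    apply le_antisymm
    · -- I ≤ N s + J
      have : I - N s ≤ J := by
        rw [hJdef]
        refine le_csInf ⟨_, mem_image_of_mem _ (⟨le_refl 0, hs⟩ : (0:ℝ) ∈ Icc 0 s)⟩ ?_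
        rintro y ⟨u, hu, rfl⟩
        show I - N s ≤ F u - N u - h * u
        rcases le_total u w with huw | hwu
        · -- u ≤ w : use the point w
          have h1 : I ≤ F w - h * w := csInf_le hbFh (mem_image_of_mem _ hw)
          have h2 : h * u ≤ h * w := mul_le_mul_of_nonneg_left huw hh
          have h3 := hNleF u hu
          rw [hNs]
          linarith
        · -- w ≤ u : then N u = N s
          have h1 : N u ≤ F w := csInf_le (hbFu u hu) (mem_image_of_mem F ⟨hw.1, hwu⟩)
          have h2 := hNmono u hu
          have h3 : I ≤ F u - h * u := csInf_le hbFh (mem_image_of_mem _ hu)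
          rw [hNs] at h2 ⊢
          linarith
      linarith
    · -- N s + J ≤ I
      rw [hIdef]
      refine le_csInf ⟨_, mem_image_of_mem _ (⟨le_refl 0, hs⟩ : (0:ℝ) ∈ Icc 0 s)⟩ ?_
      rintro y ⟨u, hu, rfl⟩
      show N s + J ≤ F u - h * u
      have h1 : J ≤ F u - N u - h * u := csInf_le hbJ (mem_image_of_mem _ hu)
      have h2 := hNmono u hu
      linarith
  rw [hLHS, hRHS, hkey]
  ring
end

section
/- Let W be a standard Brownian motion, and for λ ∈ ℝ set X^λ_s = W_s − s²/2 + λs. Define R_λ = inf{s > 1 : X^λ_s = inf_{r≤s} X^λ_r} (the right endpoint of the excursion interval of X^λ above its running infimum containing time 1). Then there exist constants c > 0 and λ₀ such that for all λ ≥ λ₀, P(|R_λ − 2λ| > 1) ≤ e^{−cλ}. -/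
open Set MeasureTheory ProbabilityTheory

/-- A standard Brownian motion on `[0,∞)` started at `0`. -/
def IsStdBrownianMotion {Ω : Type*} [MeasurableSpace Ω] (P : Measure Ω)
    (W : ℝ → Ω → ℝ) : Prop :=
  IsProbabilityMeasure P ∧
  (∀ t, Measurable (W t)) ∧
  (∀ ω, W 0 ω = 0) ∧
  (∀ ω, ContinuousOn (fun t => W t ω) (Ici 0)) ∧
  (∀ s t : ℝ, 0 ≤ s → s ≤ t →
    Measure.map (fun ω => W t ω - W s ω) P = gaussianReal 0 (Real.toNNReal (t - s))) ∧
  (∀ n : ℕ, ∀ τ : Fin (n + 1) → ℝ, (∀ i, 0 ≤ τ i) → StrictMono τ →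
    iIndepFun (m := fun _ => Real.measurableSpace)
      (fun i : Fin n => fun ω => W (τ i.succ) ω - W (τ i.castSucc) ω) P)

/-- `Z^λ(ω)`: the set of times `s ≥ 0` at which the drifted path `ω(·) + λ·`
attains its running infimum. -/
noncomputable def runInfSet (ω : ℝ → ℝ) (l : ℝ) : Set ℝ :=
  {s : ℝ | 0 ≤ s ∧ ω s + l * s = sInf ((fun r => ω r + l * r) '' Icc 0 s)}

section Aux
open Real Filter


-- symmetry
lemma gauss_symm (v : NNReal) (b : ℝ) :
    gaussianReal 0 v (Iic (-b)) = gaussianReal 0 v (Ici b) := by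
  have h := @gaussianReal_map_const_mul 0 v (-1)
  have h1 : ∀ w : NNReal, w = 1 → ∀ u : NNReal, w * u = u := by
    intro w hw u; rw [hw, one_mul]
  rw [h1 _ (by ext; norm_num) v, mul_zero] at h
  calc gaussianReal 0 v (Iic (-b))
      = (Measure.map (fun x => (-1 : ℝ) * x) (gaussianReal 0 v)) (Iic (-b)) := by
        rw [show (fun x => (-1:ℝ) * x) = ((-1 : ℝ) * ·) from rfl, h]
    _ = gaussianReal 0 v ((fun x : ℝ => -1 * x) ⁻¹' (Iic (-b))) := by
        rw [Measure.map_apply (by fun_prop) measurableSet_Iic]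
    _ = gaussianReal 0 v (Ici b) := by
        congr 1; ext x; simp

lemma gauss_half (v : NNReal) : 1 ≤ 2 * gaussianReal 0 v (Iic 0) := by
  have h := gauss_symm v 0
  simp only [neg_zero] at h
  have h2 : (1 : ENNReal) = gaussianReal 0 v univ := by
    simp [measure_univ]
  rw [h2]
  have hu : (univ : Set ℝ) ⊆ Iic 0 ∪ Ici 0 := by
    intro x _; rcases le_or_gt x 0 with h'|h' <;> simp [h', le_of_lt]
  calc gaussianReal 0 v univ ≤ gaussianReal 0 v (Iic 0 ∪ Ici 0) := measure_mono hu
    _ ≤ gaussianReal 0 v (Iic 0) + gaussianReal 0 v (Ici 0) := measure_union_le _ _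
    _ = 2 * gaussianReal 0 v (Iic 0) := by rw [← h]; ring


lemma gauss_tail (v : NNReal) (hv : v ≠ 0) (b : ℝ) (hb0 : 0 < b)
    (hb : Real.sqrt v ≤ b) :
    gaussianReal 0 v (Ici b) ≤ ENNReal.ofReal (Real.exp (-b ^ 2 / (2 * v))) := by
  have hvpos : (0:ℝ) < (v:ℝ) := by
    have : 0 < v := lt_of_le_of_ne zero_le (Ne.symm hv)
    exact_mod_cast this
  set k : ℝ := (2 * (v:ℝ))⁻¹ with hk
  have hkpos : 0 < k := by positivity
  set c : ℝ := (Real.sqrt (2 * π * v))⁻¹ with hc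
  have hcpos : 0 < c := by
    have := Real.pi_pos
    positivity
  have hexp : ∀ x : ℝ, -(x - 0) ^ 2 / (2 * (v:ℝ)) = -k * x ^ 2 := by
    intro x; rw [sub_zero, hk]; field_simp
  have hpdf : ∀ x : ℝ, gaussianPDF 0 v x = ENNReal.ofReal (c * Real.exp (-k * x ^ 2)) := by
    intro x
    simp only [gaussianPDF_def, gaussianPDFReal_def]
    rw [hexp x, ← hc]
  have hint : IntegrableOn (fun x : ℝ => (c / b) * (x * Real.exp (-k * x ^ 2))) (Ici b) := by
    exact ((integrable_mul_exp_neg_mul_sq hkpos).const_mul (c / b)).integrableOn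
  have hnn : 0 ≤ᵐ[volume.restrict (Ici b)]
      (fun x : ℝ => (c / b) * (x * Real.exp (-k * x ^ 2))) := by
    refine (ae_restrict_iff' measurableSet_Ici).mpr (ae_of_all _ fun x hx => ?_)
    have hx0 : (0:ℝ) ≤ x := le_trans hb0.le hx
    positivity
  have hF : ∀ x ∈ Ici b, HasDerivAt (fun y : ℝ => -(2 * k)⁻¹ * Real.exp (-k * y ^ 2))
      (x * Real.exp (-k * x ^ 2)) x := by
    intro x _
    have h1 := (((hasDerivAt_pow 2 x).const_mul (-k)).exp).const_mul (-(2 * k)⁻¹)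
    refine h1.congr_deriv ?_
    field_simp
    ring
  have htend : Tendsto (fun y : ℝ => -(2 * k)⁻¹ * Real.exp (-k * y ^ 2)) atTop (nhds 0) := by
    rw [show (0:ℝ) = -(2 * k)⁻¹ * 0 by ring]
    refine Tendsto.const_mul _ ?_
    exact tendsto_exp_atBot.comp
      ((tendsto_pow_atTop two_ne_zero).const_mul_atTop_of_neg (neg_lt_zero.2 hkpos))
  have hint2 : IntegrableOn (fun x : ℝ => x * Real.exp (-k * x ^ 2)) (Ioi b) :=
    (integrable_mul_exp_neg_mul_sq hkpos).integrableOn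
  have h2k : (2 * k)⁻¹ = (v:ℝ) := by rw [hk]; field_simp
  have h3 : -k * b ^ 2 = -b ^ 2 / (2 * (v:ℝ)) := by rw [hk]; field_simp
  have hval : ∫ x in Ioi b, x * Real.exp (-k * x ^ 2) = (v:ℝ) * Real.exp (-b ^ 2 / (2 * v)) := by
    rw [integral_Ioi_of_hasDerivAt_of_tendsto' hF hint2 htend, h3, h2k]
    ring
  have hcb : c / b * (v:ℝ) ≤ 1 := by
    have h2π : 1 ≤ Real.sqrt (2 * π) := by
      rw [Real.one_le_sqrt]
      nlinarith [Real.pi_gt_three]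
    have hsq : Real.sqrt (2 * π * v) = Real.sqrt (2 * π) * Real.sqrt v := by
      rw [Real.sqrt_mul (by positivity)]
    have hsv : Real.sqrt (v:ℝ) * Real.sqrt (v:ℝ) = (v:ℝ) := Real.mul_self_sqrt hvpos.le
    have hsvnn : 0 ≤ Real.sqrt (v:ℝ) := Real.sqrt_nonneg _
    have key : (v:ℝ) ≤ b * Real.sqrt (2 * π * v) := by
      rw [hsq]
      nlinarith [mul_le_mul_of_nonneg_right hb hsvnn,
        mul_le_mul_of_nonneg_left h2π (by positivity : (0:ℝ) ≤ b * Real.sqrt (v:ℝ))]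
    rw [hc, hsq] at *
    rw [div_mul_eq_mul_div, div_le_one hb0, inv_mul_le_iff₀ (by positivity)]
    nlinarith
  calc gaussianReal 0 v (Ici b) = ∫⁻ x in Ici b, gaussianPDF 0 v x := gaussianReal_apply 0 hv _
    _ ≤ ∫⁻ x in Ici b, ENNReal.ofReal ((c / b) * (x * Real.exp (-k * x ^ 2))) := by
        refine setLIntegral_mono (by fun_prop) ?_
        intro x hx
        rw [hpdf x]
        refine ENNReal.ofReal_le_ofReal ?_
        have hE := Real.exp_pos (-k * x ^ 2)
        have h5 : c * b ≤ c * x := mul_le_mul_of_nonneg_left hx hcpos.le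
        rw [div_mul_eq_mul_div]
        rw [le_div_iff₀ hb0]
        nlinarith
    _ = ENNReal.ofReal (∫ x in Ici b, (c / b) * (x * Real.exp (-k * x ^ 2))) :=
        (ofReal_integral_eq_lintegral_ofReal hint hnn).symm
    _ = ENNReal.ofReal ((c / b) * ((v:ℝ) * Real.exp (-b ^ 2 / (2 * v)))) := by
        rw [integral_Ici_eq_integral_Ioi, MeasureTheory.integral_const_mul, hval]
    _ ≤ ENNReal.ofReal (Real.exp (-b ^ 2 / (2 * v))) := by
        refine ENNReal.ofReal_le_ofReal ?_
        have hE := Real.exp_pos (-b ^ 2 / (2 * (v:ℝ)))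
        nlinarith



lemma path_good (Wf : ℝ → ℝ) (hcont : ContinuousOn Wf (Ici 0)) (hW0 : Wf 0 = 0) (lam : ℝ)
    (hlam : 2 ≤ lam)
    (hG1 : ∀ s ∈ Icc (1:ℝ) (2*lam - 1), -(lam - 1/2) < Wf s)
    (hG2a : Wf (2*lam + 1) < (2*lam + 1)/4)
    (hG2b : ∀ s ∈ Icc (0:ℝ) 1, -((2*lam + 1)/4) < Wf s) :
    |sInf {s : ℝ | 1 < s ∧ s ∈ runInfSet (fun u => Wf u - u ^ 2 / 2) lam} - 2*lam| ≤ 1 := by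
  set X : ℝ → ℝ := fun u => Wf u - u ^ 2 / 2 + lam * u with hX
  have hXfun : (fun r => (fun u => Wf u - u ^ 2 / 2) r + lam * r) = X := rfl
  have hXcont : ContinuousOn X (Ici 0) :=
    (hcont.sub (Continuous.continuousOn (by continuity))).add (Continuous.continuousOn (by continuity))
  have hlam1 : (1:ℝ) ≤ 2*lam + 1 := by linarith
  have hXcont' : ContinuousOn X (Icc 0 (2*lam+1)) := hXcont.mono Icc_subset_Ici_self
  obtain ⟨sm, hsmmem, hsmmin⟩ :=
    isCompact_Icc.exists_isMinOn (nonempty_Icc.mpr (by linarith)) hXcont'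
  have hmin : ∀ y ∈ Icc (0:ℝ) (2*lam+1), X sm ≤ X y := fun y hy => hsmmin hy
  have hX2l1 : X (2*lam+1) < -((2*lam+1)/4) := by
    simp only [hX]
    nlinarith [hG2a]
  have hsm1 : 1 < sm := by
    by_contra h
    push_neg at h
    have hsm01 : sm ∈ Icc (0:ℝ) 1 := ⟨hsmmem.1, h⟩
    have h1 := hG2b sm hsm01
    have h2 : X sm ≤ X (2*lam+1) := hmin _ ⟨by linarith, le_rfl⟩
    have h3 : 0 ≤ lam * sm - sm ^ 2 / 2 := by nlinarith [hsm01.1, hsm01.2]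
    simp only [hX] at h2
    nlinarith
  set S := {s : ℝ | 1 < s ∧ s ∈ runInfSet (fun u => Wf u - u ^ 2 / 2) lam} with hS
  have hsmS : sm ∈ S := by
    refine ⟨hsm1, hsmmem.1, ?_⟩
    rw [hXfun]
    have hleast : IsLeast (X '' Icc 0 sm) (X sm) := by
      constructor
      · exact mem_image_of_mem X ⟨hsmmem.1, le_rfl⟩
      · rintro y ⟨r, hr, rfl⟩
        exact hmin r ⟨hr.1, le_trans hr.2 hsmmem.2⟩
    exact hleast.csInf_eq.symm
  have hSne : S.Nonempty := ⟨sm, hsmS⟩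
  have hSbdd : BddBelow S := ⟨1, fun s hs => hs.1.le⟩
  have hRle : sInf S ≤ 2*lam + 1 := le_trans (csInf_le hSbdd hsmS) hsmmem.2
  have hRge : 2*lam - 1 ≤ sInf S := by
    by_contra h
    push_neg at h
    have hnall : ¬ ∀ s ∈ S, 2*lam - 1 ≤ s := fun hall => absurd (le_csInf hSne hall) (not_le.mpr h)
    push_neg at hnall
    obtain ⟨s, hsS, hslt⟩ := hnall
    have hs1 : 1 < s := hsS.1
    obtain ⟨hs0, hseq⟩ := hsS.2
    rw [hXfun] at hseq
    have hbdd : BddBelow (X '' Icc 0 s) :=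
      (isCompact_Icc.image_of_continuousOn (hXcont.mono Icc_subset_Ici_self)).bddBelow
    have hXs : X s = sInf (X '' Icc 0 s) := hseq
    have hle0 : X s ≤ X 0 := by
      rw [hXs]
      exact csInf_le hbdd (mem_image_of_mem X ⟨le_rfl, by linarith⟩)
    have hX0 : X 0 = 0 := by simp [hX, hW0]
    have hG1s := hG1 s ⟨hs1.le, hslt.le⟩
    have hprod : 0 < (s - 1) * (2*lam - 1 - s) := mul_pos (by linarith) (by linarith)
    simp only [hX] at hle0 hX0
    nlinarith
  rw [abs_le]
  constructor <;> linarith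


section Levy
variable {Ω : Type*} [MeasurableSpace Ω] (P : Measure Ω) [IsProbabilityMeasure P]
  (W : ℝ → Ω → ℝ)
  (hmeas : ∀ t, Measurable (W t)) (h0 : ∀ ω, W 0 ω = 0)
  (hmap : ∀ s t : ℝ, 0 ≤ s → s ≤ t →
    Measure.map (fun ω => W t ω - W s ω) P = gaussianReal 0 (Real.toNNReal (t - s)))
  (hind : ∀ n : ℕ, ∀ τ : Fin (n + 1) → ℝ, (∀ i, 0 ≤ τ i) → StrictMono τ →
    iIndepFun (m := fun _ => Real.measurableSpace)
      (fun i : Fin n => fun ω => W (τ i.succ) ω - W (τ i.castSucc) ω) P)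


include hmeas h0 hmap hind in
lemma levy_fin (n : ℕ) (τ : Fin (n + 1) → ℝ) (hmono : StrictMono τ) (hτ0 : τ 0 = 0) (b : ℝ) :
    P (⋃ j, {ω | W (τ j) ω < -b}) ≤ 2 * P {ω | W (τ (Fin.last n)) ω ≤ -b} := by
  classical
  set D : Fin n → Ω → ℝ := fun i ω => W (τ i.succ) ω - W (τ i.castSucc) ω with hD
  have hDmeas : ∀ i, Measurable (D i) := fun i => (hmeas _).sub (hmeas _)
  have hτnn : ∀ i, 0 ≤ τ i := fun i => hτ0 ▸ hmono.monotone (Fin.zero_le i)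
  have hiInd : iIndepFun (m := fun _ => Real.measurableSpace) D P := hind n τ hτnn hmono
  set PS : Fin (n + 1) → Ω → ℝ :=
    fun j ω => ∑ l ∈ Finset.univ.filter (fun l : Fin n => (l : ℕ) < (j : ℕ)), D l ω with hPS
  have htele : ∀ j ω, W (τ j) ω = PS j ω := by
    intro j ω
    induction j using Fin.induction with
    | zero =>
        have he : Finset.univ.filter (fun l : Fin n => (l : ℕ) < ((0 : Fin (n+1)) : ℕ)) = ∅ := by
          ext l; simp
        simp [hPS, he, hτ0, h0]
    | succ i ih =>
        have hni : i ∉ Finset.univ.filter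
            (fun l : Fin n => (l : ℕ) < ((i.castSucc : Fin (n+1)) : ℕ)) := by simp
        have hset : Finset.univ.filter (fun l : Fin n => (l : ℕ) < ((i.succ : Fin (n+1)) : ℕ))
            = insert i (Finset.univ.filter
              (fun l : Fin n => (l : ℕ) < ((i.castSucc : Fin (n+1)) : ℕ))) := by
          ext l
          simp only [Finset.mem_filter, Finset.mem_univ, true_and, Finset.mem_insert,
            Fin.val_succ, Fin.coe_castSucc, Fin.ext_iff]
          omega
        have h1 : PS i.succ ω = D i ω + PS i.castSucc ω := by
          simp only [hPS, hset, Finset.sum_insert hni]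
        rw [h1, ← ih]
        simp only [hD]
        ring
  have hPSmeas : ∀ j, Measurable (PS j) := by
    intro j
    exact Finset.measurable_sum _ fun l _ => hDmeas l
  set A : Fin (n + 1) → Set Ω := fun j => {ω | PS j ω < -b} with hA
  set E : Fin (n + 1) → Set Ω := fun j =>
    {ω | PS j ω < -b ∧ ∀ i : Fin (n + 1), (i : ℕ) < (j : ℕ) → ¬ (PS i ω < -b)} with hE
  set F : Fin (n + 1) → Set Ω := fun j =>
    {ω | W (τ (Fin.last n)) ω - W (τ j) ω ≤ 0} with hF
  have hEmeasSet : ∀ j, MeasurableSet (E j) := by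
    intro j
    have : E j = A j ∩ ⋂ (i : Fin (n + 1)), ⋂ (_ : (i : ℕ) < (j : ℕ)), (A i)ᶜ := by
      ext ω
      simp only [hE, hA, mem_setOf_eq, mem_inter_iff, mem_iInter, mem_compl_iff]
    rw [this]
    refine ((measurableSet_lt (hPSmeas j) measurable_const)).inter ?_
    exact MeasurableSet.iInter fun i => MeasurableSet.iInter fun _ =>
      (measurableSet_lt (hPSmeas i) measurable_const).compl
  have hFmeasSet : ∀ j, MeasurableSet (F j) :=
    fun j => measurableSet_le ((hmeas _).sub (hmeas _)) measurable_const
  -- union inclusion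
  have hunion : (⋃ j, A j) ⊆ ⋃ j, E j := by
    intro ω hω
    obtain ⟨j, hj⟩ := mem_iUnion.mp hω
    have hjA : PS j ω < -b := hj
    set Fs := Finset.univ.filter (fun j' : Fin (n + 1) => PS j' ω < -b) with hFs
    have hne : Fs.Nonempty := ⟨j, by simp [hFs, hjA]⟩
    set j₀ := Fs.min' hne with hj₀
    have hj₀mem : j₀ ∈ Fs := Fs.min'_mem hne
    have hj₀A : PS j₀ ω < -b := by
      have := hj₀mem; simp [hFs] at this; exact this
    refine mem_iUnion.mpr ⟨j₀, ⟨hj₀A, ?_⟩⟩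
    intro i hi hiA
    have hiFs : i ∈ Fs := by simp [hFs, hiA]
    have := Fs.min'_le i hiFs
    rw [← hj₀] at this
    exact absurd (lt_of_lt_of_le hi (by exact_mod_cast this)) (lt_irrefl _)
  -- disjointness of E
  have hEdisj : Pairwise (Function.onFun Disjoint E) := by
    intro j j' hjj'
    rcases lt_or_gt_of_ne hjj' with h | h
    · refine Set.disjoint_left.mpr fun ω hωj hωj' => ?_
      exact hωj'.2 j (by exact_mod_cast h) hωj.1
    · refine Set.disjoint_left.mpr fun ω hωj hωj' => ?_
      exact hωj.2 j' (by exact_mod_cast h) hωj'.1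
  -- F has probability at least 1/2
  have hFhalf : ∀ j, 1 ≤ 2 * P (F j) := by
    intro j
    have hs : τ j ≤ τ (Fin.last n) := hmono.monotone (Fin.le_last j)
    have hmapj := hmap (τ j) (τ (Fin.last n)) (hτnn j) hs
    have hFeq : F j = (fun ω => W (τ (Fin.last n)) ω - W (τ j) ω) ⁻¹' (Iic 0) := rfl
    rw [hFeq, ← Measure.map_apply (f := fun ω => W (τ (Fin.last n)) ω - W (τ j) ω) ((hmeas _).sub (hmeas _)) measurableSet_Iic, hmapj]
    exact gauss_half _
  -- key independence estimate
  have hkey : ∀ j, P (E j) ≤ 2 * P (E j ∩ F j) := by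
    intro j
    set S := Finset.univ.filter (fun l : Fin n => (l : ℕ) < (j : ℕ)) with hS
    set Ts := Finset.univ.filter (fun l : Fin n => ¬ ((l : ℕ) < (j : ℕ))) with hTs
    have hST : Disjoint S Ts := by
      rw [Finset.disjoint_left]
      intro l hl hl'
      rw [hS, Finset.mem_filter] at hl
      rw [hTs, Finset.mem_filter] at hl'
      exact hl'.2 hl.2
    have hIndST := hiInd.indepFun_finset S Ts hST hDmeas
    set eS : (↥S → ℝ) → (Fin (n + 1) → ℝ) := fun v i =>
      ∑ l ∈ Finset.univ.filter (fun l : ↥S => ((l : Fin n) : ℕ) < (i : ℕ)), v l with heS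
    have heSmeas : Measurable eS :=
      measurable_pi_lambda _ fun i => Finset.measurable_sum _ fun l _ => measurable_pi_apply l
    set sT : (↥Ts → ℝ) → ℝ := fun v => ∑ l : ↥Ts, v l with hsT
    have hsTmeas : Measurable sT := Finset.measurable_sum _ fun l _ => measurable_pi_apply l
    set Bset : Set (Fin (n + 1) → ℝ) :=
      {u | u j < -b ∧ ∀ i : Fin (n + 1), (i : ℕ) < (j : ℕ) → ¬ (u i < -b)} with hB
    have hBmeas : MeasurableSet Bset := by
      have h1 : ∀ i : Fin (n + 1), MeasurableSet {u : Fin (n + 1) → ℝ | u i < -b} :=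
        fun i => measurableSet_lt (measurable_pi_apply i) measurable_const
      have h2 : Bset = {u : Fin (n + 1) → ℝ | u j < -b} ∩
          ⋂ (i : Fin (n + 1)), ⋂ (_ : (i : ℕ) < (j : ℕ)), {u : Fin (n + 1) → ℝ | u i < -b}ᶜ := by
        ext u; simp only [hB, mem_setOf_eq, mem_inter_iff, mem_iInter, mem_compl_iff]
      rw [h2]
      exact (h1 j).inter (MeasurableSet.iInter fun i => MeasurableSet.iInter fun _ => (h1 i).compl)
    have hsum : ∀ ω, ∀ i : Fin (n + 1), (i : ℕ) ≤ (j : ℕ) →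
        eS (fun l : ↥S => D l ω) i = PS i ω := by
      intro ω i hi
      simp only [heS]
      rw [Finset.sum_filter, Finset.sum_coe_sort S
        (fun l : Fin n => if ((l : ℕ) < (i : ℕ)) then D l ω else 0), ← Finset.sum_filter]
      simp only [hPS]
      rw [hS, Finset.filter_filter]
      congr 1
      ext l
      simp only [Finset.mem_filter, Finset.mem_univ, true_and]
      omega
    have hEpre : E j = (fun ω (l : ↥S) => D l ω) ⁻¹' (eS ⁻¹' Bset) := by
      ext ω
      simp only [hE, mem_setOf_eq, mem_preimage, hB]
      constructor
      · rintro ⟨h1, h2⟩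
        refine ⟨by rw [hsum ω j le_rfl]; exact h1, fun i hi => ?_⟩
        rw [hsum ω i (le_of_lt hi)]; exact h2 i hi
      · rintro ⟨h1, h2⟩
        rw [hsum ω j le_rfl] at h1
        refine ⟨h1, fun i hi => ?_⟩
        have h3 := h2 i hi
        rwa [hsum ω i (le_of_lt hi)] at h3
    have hTsum : ∀ ω, sT (fun l : ↥Ts => D l ω) = W (τ (Fin.last n)) ω - W (τ j) ω := by
      intro ω
      simp only [hsT]
      rw [Finset.sum_coe_sort Ts (fun l : Fin n => D l ω)]
      have hsplit := Finset.sum_filter_add_sum_filter_not Finset.univ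
        (fun l : Fin n => (l : ℕ) < (j : ℕ)) (fun l => D l ω)
      have huniv : ∑ l, D l ω = PS (Fin.last n) ω := by
        simp only [hPS]
        congr 1
        ext l
        simp [l.is_lt]
      have hSsum : ∑ l ∈ S, D l ω = PS j ω := by rw [hS]
      rw [htele (Fin.last n) ω, htele j ω, ← huniv, ← hSsum, ← hsplit, ← hS, ← hTs]
      ring
    have hFpre : F j = (fun ω (l : ↥Ts) => D l ω) ⁻¹' (sT ⁻¹' (Iic 0)) := by
      ext ω
      simp only [hF, mem_setOf_eq, mem_preimage, mem_Iic]
      rw [hTsum ω]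
    have hmul : P (E j ∩ F j) = P (E j) * P (F j) := by
      rw [hEpre, hFpre]
      exact hIndST.measure_inter_preimage_eq_mul _ _ (heSmeas hBmeas) (hsTmeas measurableSet_Iic)
    calc P (E j) = P (E j) * 1 := (mul_one _).symm
      _ ≤ P (E j) * (2 * P (F j)) := mul_le_mul_right (hFhalf j) _
      _ = 2 * (P (E j) * P (F j)) := by ring
      _ = 2 * P (E j ∩ F j) := by rw [hmul]
  -- final chain
  have hsub : (⋃ j, E j ∩ F j) ⊆ {ω | W (τ (Fin.last n)) ω ≤ -b} := by
    intro ω hω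
    obtain ⟨j, hωj⟩ := mem_iUnion.mp hω
    obtain ⟨hωE, hωF⟩ := hωj
    have h1 : PS j ω < -b := hωE.1
    have h2 : W (τ (Fin.last n)) ω - W (τ j) ω ≤ 0 := hωF
    have h3 : W (τ j) ω = PS j ω := htele j ω
    show W (τ (Fin.last n)) ω ≤ -b
    linarith
  have hdisj2 : Pairwise (Function.onFun Disjoint fun j => E j ∩ F j) :=
    fun j j' h => ((hEdisj h).mono inter_subset_left inter_subset_left)
  have hAeq : (⋃ j, {ω | W (τ j) ω < -b}) = ⋃ j, A j := by
    refine iUnion_congr fun j => ?_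
    ext ω
    simp only [hA, mem_setOf_eq, htele j ω]
  calc P (⋃ j, {ω | W (τ j) ω < -b}) = P (⋃ j, A j) := by rw [hAeq]
    _ ≤ P (⋃ j, E j) := measure_mono hunion
    _ ≤ ∑ j, P (E j) := measure_iUnion_fintype_le _ _
    _ ≤ ∑ j, 2 * P (E j ∩ F j) := Finset.sum_le_sum fun j _ => hkey j
    _ = 2 * ∑ j, P (E j ∩ F j) := (Finset.mul_sum _ _ _).symm
    _ = 2 * P (⋃ j, E j ∩ F j) := by
        rw [measure_iUnion hdisj2 (fun j => (hEmeasSet j).inter (hFmeasSet j)), tsum_fintype]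
    _ ≤ 2 * P {ω | W (τ (Fin.last n)) ω ≤ -b} := mul_le_mul_right (measure_mono hsub) 2


include hmeas h0 hmap hind in
lemma levy_finset (T b : ℝ) (hT : 0 ≤ T) (F : Finset ℝ) (hF : ∀ x ∈ F, 0 < x ∧ x ≤ T) :
    P {ω | ∃ x ∈ F, W x ω < -b} ≤ 2 * P {ω | W (T + 1) ω ≤ -b} := by
  classical
  set F' : Finset ℝ := insert 0 (insert (T + 1) F) with hF'
  have h0mem : (0 : ℝ) ∈ F' := by simp [hF']
  have hTmem : (T + 1) ∈ F' := by simp [hF']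
  have hnn : ∀ x ∈ F', 0 ≤ x := by
    intro x hx
    simp only [hF', Finset.mem_insert] at hx
    rcases hx with rfl | rfl | hx
    · exact le_refl _
    · linarith
    · exact (hF x hx).1.le
  have hub : ∀ x ∈ F', x ≤ T + 1 := by
    intro x hx
    simp only [hF', Finset.mem_insert] at hx
    rcases hx with rfl | rfl | hx
    · linarith
    · exact le_refl _
    · linarith [(hF x hx).2]
  obtain ⟨n, hn⟩ : ∃ n, F'.card = n + 1 := by
    have : 0 < F'.card := Finset.card_pos.mpr ⟨0, h0mem⟩
    exact ⟨F'.card - 1, by omega⟩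
  set e := F'.orderIsoOfFin hn with he
  set τ : Fin (n + 1) → ℝ := fun i => (e i : ℝ) with hτ
  have hmono : StrictMono τ := by
    intro i j hij
    have := e.strictMono hij
    exact_mod_cast this
  have hmem : ∀ i, τ i ∈ F' := fun i => (e i).2
  have hrange : ∀ x ∈ F', ∃ i, τ i = x := by
    intro x hx
    exact ⟨e.symm ⟨x, hx⟩, by simp [hτ]⟩
  have hτ0 : τ 0 = 0 := by
    obtain ⟨i0, hi0⟩ := hrange 0 h0mem
    have hle : τ 0 ≤ 0 := hi0 ▸ hmono.monotone (Fin.zero_le i0)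
    exact le_antisymm hle (hnn _ (hmem 0))
  have hτlast : τ (Fin.last n) = T + 1 := by
    obtain ⟨i1, hi1⟩ := hrange (T + 1) hTmem
    have hge : T + 1 ≤ τ (Fin.last n) := hi1 ▸ hmono.monotone (Fin.le_last i1)
    exact le_antisymm (hub _ (hmem _)) hge
  have hsub : {ω | ∃ x ∈ F, W x ω < -b} ⊆ ⋃ j, {ω | W (τ j) ω < -b} := by
    intro ω hω
    obtain ⟨x, hxF, hx⟩ := hω
    obtain ⟨j, hj⟩ := hrange x (by simp [hF', hxF])
    exact mem_iUnion.mpr ⟨j, by rw [hj]; exact hx⟩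
  calc P {ω | ∃ x ∈ F, W x ω < -b} ≤ P (⋃ j, {ω | W (τ j) ω < -b}) := measure_mono hsub
    _ ≤ 2 * P {ω | W (τ (Fin.last n)) ω ≤ -b} := levy_fin P W hmeas h0 hmap hind n τ hmono hτ0 b
    _ = 2 * P {ω | W (T + 1) ω ≤ -b} := by rw [hτlast]

include hmeas h0 hmap hind in
lemma max_ineq (hcont : ∀ ω, ContinuousOn (fun t => W t ω) (Ici 0))
    (b T : ℝ) (hb : 1 ≤ b) (hT : 0 ≤ T) :
    P {ω | ∃ s ∈ Icc 0 T, W s ω ≤ -b} ≤ 2 * P {ω | W (T + 1) ω ≤ -(b - 1)} := by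
  classical
  obtain ⟨f, hf⟩ := exists_surjective_nat ℚ
  set C : ℚ → Set Ω := fun q => {ω | 0 < (q : ℝ) ∧ (q : ℝ) ≤ T ∧ W q ω < -(b - 1)} with hC
  have step1 : {ω | ∃ s ∈ Icc 0 T, W s ω ≤ -b} ⊆ ⋃ m : ℕ, C (f m) := by
    intro ω hω
    obtain ⟨s, ⟨hs0, hsT⟩, hWs⟩ := hω
    have hspos : 0 < s := by
      rcases lt_or_eq_of_le hs0 with h | h
      · exact h
      · exfalso; rw [← h] at hWs; rw [h0 ω] at hWs; linarith
    have hc : ContinuousWithinAt (fun t => W t ω) (Ici 0) s := hcont ω s (mem_Ici.mpr hs0)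
    have hV : (fun t => W t ω) ⁻¹' Iio (W s ω + 1) ∈ nhdsWithin s (Ici 0) :=
      hc (Iio_mem_nhds (lt_add_one _))
    rw [mem_nhdsWithin] at hV
    obtain ⟨U, hUopen, hsU, hUsub⟩ := hV
    obtain ⟨δ, hδpos, hball⟩ := Metric.isOpen_iff.mp hUopen s hsU
    obtain ⟨q, hq1, hq2⟩ := exists_rat_btwn (show max (s - δ) 0 < s by
      rw [max_lt_iff]; exact ⟨by linarith, hspos⟩)
    have hq0 : 0 < (q : ℝ) := lt_of_le_of_lt (le_max_right _ _) hq1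
    have hqT : (q : ℝ) ≤ T := le_trans hq2.le hsT
    have hqU : (q : ℝ) ∈ U := by
      apply hball
      rw [Metric.mem_ball, Real.dist_eq, abs_lt]
      have := lt_of_le_of_lt (le_max_left _ _) hq1
      constructor <;> linarith
    have hWq : W q ω < W s ω + 1 := hUsub ⟨hqU, le_of_lt hq0⟩
    obtain ⟨m, hm⟩ := hf q
    refine mem_iUnion.mpr ⟨m, ?_⟩
    rw [hm]
    exact ⟨hq0, hqT, by linarith⟩
  set V : ℕ → Set Ω := fun N => ⋃ m ∈ Finset.range N, C (f m) with hVdef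
  have hVmono : Monotone V := by
    intro N M hNM
    intro ω hω
    simp only [hVdef, mem_iUnion, Finset.mem_range] at hω ⊢
    obtain ⟨m, hm, hmem⟩ := hω
    exact ⟨m, by omega, hmem⟩
  have hVunion : (⋃ m : ℕ, C (f m)) = ⋃ N, V N := by
    ext ω
    simp only [mem_iUnion, hVdef, Finset.mem_range]
    constructor
    · rintro ⟨m, hm⟩; exact ⟨m + 1, m, by omega, hm⟩
    · rintro ⟨N, m, _, hm⟩; exact ⟨m, hm⟩
  have hVbound : ∀ N, P (V N) ≤ 2 * P {ω | W (T + 1) ω ≤ -(b - 1)} := by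
    intro N
    set FN : Finset ℝ := Finset.image (fun m => ((f m : ℚ) : ℝ))
      ((Finset.range N).filter (fun m => 0 < ((f m : ℚ) : ℝ) ∧ ((f m : ℚ) : ℝ) ≤ T)) with hFN
    have hFNcond : ∀ x ∈ FN, 0 < x ∧ x ≤ T := by
      intro x hx
      simp only [hFN, Finset.mem_image, Finset.mem_filter, Finset.mem_range] at hx
      obtain ⟨m, ⟨_, h1, h2⟩, rfl⟩ := hx
      exact ⟨h1, h2⟩
    have hVsub : V N ⊆ {ω | ∃ x ∈ FN, W x ω < -(b - 1)} := by
      intro ω hω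
      simp only [hVdef, mem_iUnion, Finset.mem_range] at hω
      obtain ⟨m, hmN, h1, h2, h3⟩ := hω
      refine ⟨((f m : ℚ) : ℝ), ?_, h3⟩
      simp only [hFN, Finset.mem_image, Finset.mem_filter, Finset.mem_range]
      exact ⟨m, ⟨hmN, h1, h2⟩, rfl⟩
    exact le_trans (measure_mono hVsub)
      (levy_finset P W hmeas h0 hmap hind T (b - 1) hT FN hFNcond)
  calc P {ω | ∃ s ∈ Icc 0 T, W s ω ≤ -b} ≤ P (⋃ m : ℕ, C (f m)) := measure_mono step1
    _ = ⨆ N, P (V N) := by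
        rw [hVunion]
        exact Monotone.measure_iUnion hVmono
    _ ≤ 2 * P {ω | W (T + 1) ω ≤ -(b - 1)} := iSup_le hVbound


include hmeas h0 hmap hind in
lemma max_ineq_gauss (hcont : ∀ ω, ContinuousOn (fun t => W t ω) (Ici 0))
    (b T : ℝ) (hb : 2 ≤ b) (hT : 0 ≤ T) (hsq : Real.sqrt (T + 1) ≤ b - 1) :
    P {ω | ∃ s ∈ Icc 0 T, W s ω ≤ -b} ≤
      ENNReal.ofReal (2 * Real.exp (-(b - 1) ^ 2 / (2 * (T + 1)))) := by
  have h1 := max_ineq P W hmeas h0 hmap hind hcont b T (by linarith) hT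
  have hT1 : (0:ℝ) < T + 1 := by linarith
  have hveq : ((T + 1 - 0).toNNReal : ℝ) = T + 1 := by
    rw [Real.coe_toNNReal _ (by linarith)]; ring
  have hvne : (T + 1 - 0).toNNReal ≠ 0 := by
    intro hcon
    rw [hcon] at hveq; simp at hveq; linarith
  have hset : {ω | W (T + 1) ω ≤ -(b - 1)} =
      (fun ω => W (T + 1) ω - W 0 ω) ⁻¹' (Iic (-(b - 1))) := by
    ext ω; simp [h0 ω]
  have hPeq : P {ω | W (T + 1) ω ≤ -(b - 1)} =
      gaussianReal 0 (T + 1 - 0).toNNReal (Iic (-(b - 1))) := by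
    rw [hset, ← Measure.map_apply (f := fun ω => W (T + 1) ω - W 0 ω) ((hmeas _).sub (hmeas _)) measurableSet_Iic,
      hmap 0 (T + 1) le_rfl (by linarith)]
  have hb1 : 0 < b - 1 := by linarith
  have htail : gaussianReal 0 (T + 1 - 0).toNNReal (Iic (-(b - 1))) ≤
      ENNReal.ofReal (Real.exp (-(b - 1) ^ 2 / (2 * (T + 1)))) := by
    rw [gauss_symm]
    have h2 := gauss_tail (T + 1 - 0).toNNReal hvne (b - 1) hb1 (by rw [hveq]; exact hsq)
    rwa [hveq] at h2
  calc P {ω | ∃ s ∈ Icc 0 T, W s ω ≤ -b}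
      ≤ 2 * P {ω | W (T + 1) ω ≤ -(b - 1)} := h1
    _ ≤ 2 * ENNReal.ofReal (Real.exp (-(b - 1) ^ 2 / (2 * (T + 1)))) := by
        rw [hPeq]; exact mul_le_mul_right htail 2
    _ = ENNReal.ofReal (2 * Real.exp (-(b - 1) ^ 2 / (2 * (T + 1)))) := by
        rw [ENNReal.ofReal_mul (by norm_num : (0:ℝ) ≤ 2)]
        norm_num

include hmeas h0 hmap in
lemma single_tail (t b : ℝ) (ht : 0 < t) (hb : 0 < b) (hsq : Real.sqrt t ≤ b) :
    P {ω | b ≤ W t ω} ≤ ENNReal.ofReal (Real.exp (-b ^ 2 / (2 * t))) := by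
  have hveq : ((t - 0).toNNReal : ℝ) = t := by rw [Real.coe_toNNReal _ (by linarith)]; ring
  have hvne : (t - 0).toNNReal ≠ 0 := by
    intro hcon; rw [hcon] at hveq; simp at hveq; linarith
  have hset : {ω | b ≤ W t ω} = (fun ω => W t ω - W 0 ω) ⁻¹' (Ici b) := by
    ext ω; simp [h0 ω]
  rw [hset, ← Measure.map_apply (f := fun ω => W t ω - W 0 ω) ((hmeas _).sub (hmeas _)) measurableSet_Ici,
    hmap 0 t le_rfl ht.le]
  have h2 := gauss_tail (t - 0).toNNReal hvne b hb (by rw [hveq]; exact hsq)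
  rwa [hveq] at h2

end Levy

lemma exp_helper (x c : ℝ) (h : c + 6 ≤ x) : 2 * Real.exp (-x) ≤ 1/3 * Real.exp (-c) := by
  have h1 : (6:ℝ) ≤ Real.exp (x - c) := by
    have := Real.add_one_le_exp (x - c)
    linarith
  have h2 : 6 * Real.exp (-x) ≤ Real.exp (x - c) * Real.exp (-x) :=
    mul_le_mul_of_nonneg_right h1 (Real.exp_nonneg _)
  rw [← Real.exp_add] at h2
  have h3 : x - c + -x = -c := by ring
  rw [h3] at h2
  linarith [Real.exp_nonneg (-x)]


end Aux

/-- With `X^λ_s = W_s − s²/2 + λs` and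
`R_λ = inf {s > 1 : X^λ_s = inf_{r ≤ s} X^λ_r}` (the right endpoint of the
excursion interval of `X^λ` above its running infimum containing the time `1`),
there exist `c > 0` and `λ₀` such that for all `λ ≥ λ₀`,
`P(|R_λ − 2λ| > 1) ≤ e^{−cλ}`. -/
theorem right_endpoint_concentration {Ω : Type*} [MeasurableSpace Ω] (P : Measure Ω)
    (W : ℝ → Ω → ℝ) (hW : IsStdBrownianMotion P W) :
    ∃ c > (0 : ℝ), ∃ lam0 : ℝ, ∀ lam : ℝ, lam0 ≤ lam →
      P {ω | 1 < |sInf {s : ℝ | 1 < s ∧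
          s ∈ runInfSet (fun u => W u ω - u ^ 2 / 2) lam} - 2 * lam|} ≤
        ENNReal.ofReal (Real.exp (-c * lam)) := by
  obtain ⟨hprob, hmeas, h0, hcont, hmap, hind⟩ := hW
  haveI := hprob
  refine ⟨1/100, by norm_num, 200, fun lam hlam => ?_⟩
  have hlam0 : (0:ℝ) < lam := by linarith
  -- inclusion into three bad events
  have hsubset : {ω | 1 < |sInf {s : ℝ | 1 < s ∧
      s ∈ runInfSet (fun u => W u ω - u ^ 2 / 2) lam} - 2 * lam|} ⊆
      ({ω | ∃ s ∈ Icc (0:ℝ) (2*lam - 1), W s ω ≤ -(lam - 1/2)} ∪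
        {ω | (2*lam + 1)/4 ≤ W (2*lam + 1) ω}) ∪
      {ω | ∃ s ∈ Icc (0:ℝ) 1, W s ω ≤ -((2*lam + 1)/4)} := by
    intro ω hω
    simp only [mem_setOf_eq] at hω
    by_contra hcon
    simp only [mem_union, mem_setOf_eq, not_or] at hcon
    obtain ⟨⟨hn1, hn2⟩, hn3⟩ := hcon
    push_neg at hn1 hn2 hn3
    have hG1 : ∀ s ∈ Icc (1:ℝ) (2*lam - 1), -(lam - 1/2) < W s ω := by
      intro s hs
      exact hn1 s ⟨by linarith [hs.1], hs.2⟩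
    have hG2b : ∀ s ∈ Icc (0:ℝ) 1, -((2*lam + 1)/4) < W s ω := fun s hs => hn3 s hs
    have hgood := path_good (fun t => W t ω) (hcont ω) (h0 ω) lam (by linarith) hG1 hn2 hG2b
    exact absurd hω (not_lt.mpr hgood)
  -- square root bounds
  have hsq1 : Real.sqrt (2*lam - 1 + 1) ≤ lam - 1/2 - 1 := by
    have h2 : 2*lam - 1 + 1 = 2*lam := by ring
    rw [h2]
    have h3 := Real.sqrt_le_sqrt (show 2*lam ≤ (lam - 3/2)^2 by nlinarith)
    rw [Real.sqrt_sq (by linarith : (0:ℝ) ≤ lam - 3/2)] at h3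
    linarith
  have hsq2 : Real.sqrt (2*lam + 1) ≤ (2*lam + 1)/4 := by
    have h3 := Real.sqrt_le_sqrt (show 2*lam + 1 ≤ ((2*lam + 1)/4)^2 by nlinarith)
    rwa [Real.sqrt_sq (by linarith : (0:ℝ) ≤ (2*lam + 1)/4)] at h3
  have hsq3 : Real.sqrt (1 + 1) ≤ (2*lam + 1)/4 - 1 := by
    have h3 := Real.sqrt_le_sqrt (show (1:ℝ) + 1 ≤ ((2*lam + 1)/4 - 1)^2 by nlinarith)
    rwa [Real.sqrt_sq (by linarith : (0:ℝ) ≤ (2*lam + 1)/4 - 1)] at h3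
  have hb1 := max_ineq_gauss P W hmeas h0 hmap hind hcont (lam - 1/2) (2*lam - 1)
    (by linarith) (by linarith) hsq1
  have hb2 := single_tail P W hmeas h0 hmap (2*lam + 1) ((2*lam + 1)/4)
    (by linarith) (by linarith) hsq2
  have hb3 := max_ineq_gauss P W hmeas h0 hmap hind hcont ((2*lam + 1)/4) 1
    (by linarith) (by norm_num) hsq3
  -- numeric bound
  have hlamne : lam ≠ 0 := ne_of_gt hlam0
  have k1 : 2 * Real.exp (-(lam - 1/2 - 1) ^ 2 / (2 * (2*lam - 1 + 1))) ≤
      1/3 * Real.exp (-(1/100 * lam)) := by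
    have he : -(lam - 1/2 - 1) ^ 2 / (2 * (2*lam - 1 + 1)) = -((lam - 3/2)^2 / (4*lam)) := by
      field_simp
      ring
    rw [he]
    refine exp_helper _ _ ?_
    rw [le_div_iff₀ (by linarith : (0:ℝ) < 4*lam)]
    nlinarith
  have k2 : Real.exp (-((2*lam + 1)/4) ^ 2 / (2 * (2*lam + 1))) ≤
      1/3 * Real.exp (-(1/100 * lam)) := by
    have he : -((2*lam + 1)/4) ^ 2 / (2 * (2*lam + 1)) = -((2*lam + 1) / 32) := by
      field_simp
      ring
    rw [he]
    have h4 := exp_helper ((2*lam + 1) / 32) (1/100 * lam) (by nlinarith)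
    linarith [Real.exp_nonneg (-((2*lam + 1) / 32))]
  have k3 : 2 * Real.exp (-((2*lam + 1)/4 - 1) ^ 2 / (2 * (1 + 1))) ≤
      1/3 * Real.exp (-(1/100 * lam)) := by
    have he : -((2*lam + 1)/4 - 1) ^ 2 / (2 * ((1:ℝ) + 1)) = -((2*lam - 3)^2 / 64) := by
      field_simp
      ring
    rw [he]
    refine exp_helper _ _ ?_
    nlinarith
  have hnum : 2 * Real.exp (-(lam - 1/2 - 1) ^ 2 / (2 * (2*lam - 1 + 1))) +
      Real.exp (-((2*lam + 1)/4) ^ 2 / (2 * (2*lam + 1))) +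
      2 * Real.exp (-((2*lam + 1)/4 - 1) ^ 2 / (2 * (1 + 1))) ≤
      Real.exp (-(1/100) * lam) := by
    have he : Real.exp (-(1/100) * lam) = Real.exp (-(1/100 * lam)) := by
      congr 1; ring
    rw [he]
    linarith
  calc P {ω | 1 < |sInf {s : ℝ | 1 < s ∧
        s ∈ runInfSet (fun u => W u ω - u ^ 2 / 2) lam} - 2 * lam|}
      ≤ P (({ω | ∃ s ∈ Icc (0:ℝ) (2*lam - 1), W s ω ≤ -(lam - 1/2)} ∪
          {ω | (2*lam + 1)/4 ≤ W (2*lam + 1) ω}) ∪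
          {ω | ∃ s ∈ Icc (0:ℝ) 1, W s ω ≤ -((2*lam + 1)/4)}) := measure_mono hsubset
    _ ≤ (P {ω | ∃ s ∈ Icc (0:ℝ) (2*lam - 1), W s ω ≤ -(lam - 1/2)} +
          P {ω | (2*lam + 1)/4 ≤ W (2*lam + 1) ω}) +
          P {ω | ∃ s ∈ Icc (0:ℝ) 1, W s ω ≤ -((2*lam + 1)/4)} :=
        le_trans (measure_union_le _ _) (add_le_add_left (measure_union_le _ _) _)
    _ ≤ (ENNReal.ofReal (2 * Real.exp (-(lam - 1/2 - 1) ^ 2 / (2 * (2*lam - 1 + 1)))) +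
          ENNReal.ofReal (Real.exp (-((2*lam + 1)/4) ^ 2 / (2 * (2*lam + 1))))) +
          ENNReal.ofReal (2 * Real.exp (-((2*lam + 1)/4 - 1) ^ 2 / (2 * (1 + 1)))) :=
        add_le_add (add_le_add hb1 hb2) hb3
    _ = ENNReal.ofReal (2 * Real.exp (-(lam - 1/2 - 1) ^ 2 / (2 * (2*lam - 1 + 1))) +
          Real.exp (-((2*lam + 1)/4) ^ 2 / (2 * (2*lam + 1))) +
          2 * Real.exp (-((2*lam + 1)/4 - 1) ^ 2 / (2 * (1 + 1)))) := by
        rw [← ENNReal.ofReal_add (by positivity) (by positivity),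
          ← ENNReal.ofReal_add (by positivity) (by positivity)]
    _ ≤ ENNReal.ofReal (Real.exp (-(1/100) * lam)) := ENNReal.ofReal_le_ofReal hnum
end

section
/- Let W be a standard Brownian motion, X^λ_s = W_s − s²/2 + λs, and let L_λ = sup(Z^λ ∩ [0,1)) be the last time before 1 at which X^λ attains its running infimum. Then there exist constants c > 0, x₀ and λ₀ such that for all x > x₀ and λ ≥ λ₀, P(L_λ ≥ x/λ²) ≤ e^{−cx}. -/
open Set MeasureTheory ProbabilityTheory

section Aux
open Real NNReal

lemma integrableOn_exp_mul_Iic_aux {c : ℝ} (hc : 0 < c) (b : ℝ) :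
    IntegrableOn (fun x => Real.exp (c*x)) (Iic b) := by
  have A : MeasurableEmbedding (fun x : ℝ => -x) :=
    (Homeomorph.neg ℝ).isClosedEmbedding.measurableEmbedding
  have h : IntegrableOn (fun x => Real.exp (-c*x)) (Ici (-b)) :=
    (integrableOn_Ici_iff_integrableOn_Ioi).mpr (exp_neg_integrableOn_Ioi (-b) hc)
  have key : Measure.map (fun x : ℝ => -x) ((volume : Measure ℝ).restrict (Iic b))
      = (volume : Measure ℝ).restrict (Ici (-b)) := by
    have hm := Measure.map_neg_eq_self (volume : Measure ℝ)
    have : Iic b = (fun x : ℝ => -x) ⁻¹' (Ici (-b)) := by ext x; simp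
    rw [this, ← Measure.restrict_map A.measurable measurableSet_Ici]
    rw [show (Neg.neg : ℝ → ℝ) = fun x : ℝ => -x from rfl] at hm
    rw [hm]
  have h2 : Integrable (fun x => Real.exp (-c*x))
      (Measure.map (fun x : ℝ => -x) ((volume : Measure ℝ).restrict (Iic b))) := by
    rw [key]; exact h
  rw [A.integrable_map_iff] at h2
  apply h2.congr
  filter_upwards with x
  simp [Function.comp, neg_mul, mul_neg]

lemma integral_exp_mul_Iic_aux {c : ℝ} (hc : 0 < c) (b : ℝ) :
    ∫ x in Iic b, Real.exp (c*x) = Real.exp (c*b) / c := by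
  have h := integral_Iic_of_hasDerivAt_of_tendsto' (a := b)
    (f := fun x => Real.exp (c*x)/c) (f' := fun x => Real.exp (c*x))
    (m := 0) ?_ (integrableOn_exp_mul_Iic_aux hc b) ?_
  · rw [h]; ring
  · intro x _
    have h1 : HasDerivAt (fun x => Real.exp (c*x)) (Real.exp (c*x) * c) x := by
      simpa [Function.comp_def] using (Real.hasDerivAt_exp (c*x)).comp x ((hasDerivAt_id x).const_mul c)
    have h2 := h1.div_const c
    rw [mul_div_assoc, div_self hc.ne', mul_one] at h2
    exact h2
  · have : Filter.Tendsto (fun x => c * x) Filter.atBot Filter.atBot :=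
      Filter.Tendsto.const_mul_atBot hc Filter.tendsto_id
    simpa using ((Real.tendsto_exp_atBot.comp this).div_const c)

lemma gauss_half_s10 (v : ℝ≥0) : (2:ENNReal)⁻¹ ≤ gaussianReal 0 v (Iic 0) := by
  rcases eq_or_ne v 0 with rfl | hv
  · simp [gaussianReal_zero_var]
  · have hmap : Measure.map (fun x => (-1:ℝ) * x) (gaussianReal 0 v) = gaussianReal 0 v := by
      simpa using gaussianReal_map_const_mul (μ := 0) (v := v) (-1)
    have h1 : gaussianReal 0 v (Ici 0) = gaussianReal 0 v (Iic 0) := by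
      conv_lhs => rw [← hmap]
      rw [Measure.map_apply (by fun_prop) measurableSet_Ici]
      congr 1
      ext x
      simp
    have h2 : (1:ENNReal) ≤ gaussianReal 0 v (Iic 0) + gaussianReal 0 v (Ici 0) := by
      have := measure_union_le (μ := gaussianReal 0 v) (Iic 0) (Ici 0)
      have huniv : Iic (0:ℝ) ∪ Ici 0 = univ := by ext x; simp [le_total]
      rw [huniv] at this
      simpa using this
    rw [h1, ← two_mul] at h2
    rw [show ((2:ENNReal))⁻¹ = 1/2 by norm_num, ENNReal.div_le_iff_le_mul (by norm_num) (by norm_num), mul_comm]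
    exact h2

lemma gauss_tail_s10 (v : ℝ≥0) {a : ℝ} (ha : 0 < a) (hav : (v:ℝ) ≤ a^2) :
    gaussianReal 0 v (Iic (-a)) ≤ ENNReal.ofReal (Real.exp (-(a^2)/(2*v))) := by
  rcases eq_or_ne v 0 with rfl | hv
  · rw [gaussianReal_zero_var]
    rw [Measure.dirac_apply' _ measurableSet_Iic]
    simp [Set.indicator, ha.not_ge, not_le.mpr (neg_lt_zero.mpr ha)]
  · have hv0 : (0:ℝ) < v := by positivity
    set c : ℝ := a / v with hc
    have hcpos : 0 < c := by positivity
    set s : ℝ := (Real.sqrt (2 * π * (v:ℝ)))⁻¹ with hs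
    have hspos : 0 < s := inv_pos.mpr (Real.sqrt_pos.mpr (by positivity))
    set K : ℝ := s * Real.exp (a^2/(2*v)) with hK
    have hKpos : 0 < K := mul_pos hspos (Real.exp_pos _)
    rw [gaussianReal_apply 0 hv]
    have hpt : ∀ x : ℝ, gaussianPDF 0 v x ≤ ENNReal.ofReal (K * Real.exp (c*x)) := by
      intro x
      rw [gaussianPDF_def]
      apply ENNReal.ofReal_le_ofReal
      rw [gaussianPDFReal_def]
      show s * Real.exp (-(x - 0)^2 / (2*(v:ℝ))) ≤ K * Real.exp (c*x)
      rw [hK, mul_assoc]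
      apply mul_le_mul_of_nonneg_left _ hspos.le
      rw [← Real.exp_add]
      apply Real.exp_le_exp.mpr
      rw [hc, ← sub_nonneg]
      field_simp
      nlinarith [sq_nonneg ((v:ℝ)*(x+a)), sq_nonneg (x+a)]
    calc ∫⁻ x in Iic (-a), gaussianPDF 0 v x
        ≤ ∫⁻ x in Iic (-a), ENNReal.ofReal (K * Real.exp (c*x)) := lintegral_mono fun x => hpt x
      _ = ENNReal.ofReal (∫ x in Iic (-a), K * Real.exp (c*x)) := by
          rw [← ofReal_integral_eq_lintegral_ofReal
            ((integrableOn_exp_mul_Iic_aux hcpos (-a)).const_mul K)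
            (Filter.Eventually.of_forall fun x => by positivity)]
      _ ≤ ENNReal.ofReal (Real.exp (-(a^2)/(2*v))) := by
          apply ENNReal.ofReal_le_ofReal
          rw [MeasureTheory.integral_const_mul, integral_exp_mul_Iic_aux hcpos]
          have hsv : Real.sqrt v ≤ a := by
            rw [show a = Real.sqrt (a^2) by rw [Real.sqrt_sq ha.le]]
            exact Real.sqrt_le_sqrt hav
          have h1 : (v:ℝ)/a ≤ Real.sqrt v := by
            rw [div_le_iff₀ ha]
            nlinarith [Real.sq_sqrt hv0.le, Real.sqrt_nonneg (v:ℝ)]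
          have h2 : Real.sqrt v ≤ Real.sqrt (2*π*(v:ℝ)) :=
            Real.sqrt_le_sqrt (by nlinarith [pi_gt_three])
          have hs1 : s * ((v:ℝ)/a) ≤ 1 := by
            rw [hs]
            calc (Real.sqrt (2 * π * (v:ℝ)))⁻¹ * ((v:ℝ)/a)
                ≤ (Real.sqrt (2 * π * (v:ℝ)))⁻¹ * Real.sqrt (2*π*(v:ℝ)) := by
                  apply mul_le_mul_of_nonneg_left (h1.trans h2) (by positivity)
              _ = 1 := inv_mul_cancel₀ (by positivity)
          have e : Real.exp (c*(-a)) = Real.exp (-(a^2)/(2*(v:ℝ))) / Real.exp (a^2/(2*(v:ℝ))) := by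
            rw [← Real.exp_sub]; congr 1; rw [hc]; field_simp; ring
          have key : K * (Real.exp (c*(-a))/c) = (s * ((v:ℝ)/a)) * Real.exp (-(a^2)/(2*(v:ℝ))) := by
            rw [e, hK, hc]
            field_simp
          rw [key]
          nlinarith [Real.exp_pos (-(a^2)/(2*(v:ℝ)))]

lemma fin_tele {m : ℕ} (g : Fin (m+1) → ℝ) (i : Fin m) :
    ∑ l ∈ Finset.Iic i, (g l.succ - g l.castSucc) = g i.succ - g 0 := by
  obtain ⟨k, hk⟩ := i
  induction k with
  | zero =>
    have h1 : Finset.Iic (⟨0, hk⟩ : Fin m) = {⟨0, hk⟩} := by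
      ext l; simp [Fin.le_def, Nat.le_zero, Fin.ext_iff]
    rw [h1, Finset.sum_singleton]
    norm_num [Fin.ext_iff]
  | succ k ih =>
    have hk' : k < m := Nat.lt_of_succ_lt hk
    have h1 : Finset.Iic (⟨k+1, hk⟩ : Fin m) = insert ⟨k+1, hk⟩ (Finset.Iic ⟨k, hk'⟩) := by
      ext l; simp [Fin.le_def, Fin.ext_iff]; omega
    have h2 : (⟨k+1, hk⟩ : Fin m) ∉ Finset.Iic (⟨k, hk'⟩ : Fin m) := by
      simp [Fin.le_def]
    rw [h1, Finset.sum_insert h2, ih hk']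
    have h3 : g ((⟨k+1, hk⟩ : Fin m).castSucc) = g ((⟨k, hk'⟩ : Fin m).succ) :=
      congrArg g (Fin.ext rfl)
    rw [h3]
    ring

lemma levy {Ω : Type*} [MeasurableSpace Ω] (P : Measure Ω) [IsProbabilityMeasure P]
    (W : ℝ → Ω → ℝ) (hmeas : ∀ t, Measurable (W t)) (h0 : ∀ ω, W 0 ω = 0)
    (hgauss : ∀ s t : ℝ, 0 ≤ s → s ≤ t →
      Measure.map (fun ω => W t ω - W s ω) P = gaussianReal 0 (Real.toNNReal (t - s)))
    (hindep : ∀ n : ℕ, ∀ τ : Fin (n + 1) → ℝ, (∀ i, 0 ≤ τ i) → StrictMono τ →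
      iIndepFun (m := fun _ => Real.measurableSpace)
        (fun i : Fin n => fun ω => W (τ i.succ) ω - W (τ i.castSucc) ω) P)
    (T : ℝ) (hT : 0 < T) (F : Finset ℝ) (hF : ∀ q ∈ F, 0 ≤ q ∧ q ≤ T) (cc : ℝ) :
    P {ω | ∃ q ∈ F, W q ω ≤ cc} ≤ 2 * P {ω | W T ω ≤ cc} := by
  -- law of W t - W s
  have hlaw : ∀ s t : ℝ, 0 ≤ s → s ≤ t →
      P {ω | W t ω - W s ω ≤ (0:ℝ)} = gaussianReal 0 (Real.toNNReal (t - s)) (Iic 0) := by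
    intro s t hs hst
    rw [← hgauss s t hs hst, Measure.map_apply (by exact (hmeas t).sub (hmeas s)) measurableSet_Iic]
    rfl
  have hlawT : P {ω | W T ω ≤ cc} = gaussianReal 0 (Real.toNNReal T) (Iic cc) := by
    have he : (fun ω => W T ω - W 0 ω) = W T := by funext ω; rw [h0, sub_zero]
    have := hgauss 0 T le_rfl hT.le
    rw [he, sub_zero] at this
    rw [← this, Measure.map_apply (hmeas T) measurableSet_Iic]
    rfl
  by_cases hcc : 0 ≤ cc
  · -- trivial case
    have h1 : (2:ENNReal)⁻¹ ≤ P {ω | W T ω ≤ cc} := by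
      rw [hlawT]
      exact le_trans (gauss_half_s10 _) (measure_mono (Iic_subset_Iic.mpr hcc))
    calc P {ω | ∃ q ∈ F, W q ω ≤ cc} ≤ 1 := prob_le_one
      _ = 2 * (2:ENNReal)⁻¹ := (ENNReal.mul_inv_cancel (by norm_num) (by norm_num)).symm
      _ ≤ 2 * P {ω | W T ω ≤ cc} := mul_le_mul_right h1 2
  · push_neg at hcc
    classical
    set F' : Finset ℝ := insert T (F.filter (fun q => 0 < q)) with hF'
    set m : ℕ := F'.card with hm
    have hmpos : 0 < m := Finset.card_pos.mpr ⟨T, Finset.mem_insert_self _ _⟩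
    set u : Fin m → ℝ := fun i => F'.orderEmbOfFin rfl i with hu
    have hu_mem : ∀ i, u i ∈ F' := fun i => Finset.orderEmbOfFin_mem F' rfl i
    have hu_strict : StrictMono u := (F'.orderEmbOfFin rfl).strictMono
    have hF'pos : ∀ q ∈ F', 0 < q := by
      intro q hq
      rcases Finset.mem_insert.mp hq with rfl | hq'
      · exact hT
      · exact (Finset.mem_filter.mp hq').2
    have hF'le : ∀ q ∈ F', q ≤ T := by
      intro q hq
      rcases Finset.mem_insert.mp hq with rfl | hq'
      · exact le_rfl
      · exact (hF q (Finset.mem_filter.mp hq').1).2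
    have hu_pos : ∀ i, 0 < u i := fun i => hF'pos _ (hu_mem i)
    have hu_leT : ∀ i, u i ≤ T := fun i => hF'le _ (hu_mem i)
    have hu_surj : ∀ q ∈ F', ∃ i, u i = q := by
      intro q hq
      have : q ∈ Set.range (F'.orderEmbOfFin rfl) := by
        rw [Finset.range_orderEmbOfFin]; exact_mod_cast hq
      exact this
    have hu_last : u ⟨m - 1, Nat.sub_lt hmpos one_pos⟩ = T := by
      have h1 : u ⟨m - 1, Nat.sub_lt hmpos one_pos⟩ = F'.max' ⟨T, Finset.mem_insert_self _ _⟩ :=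
        Finset.orderEmbOfFin_last (h := rfl) (hz := hmpos)
      rw [h1]
      apply le_antisymm
      · exact hF'le _ (F'.max'_mem _)
      · exact Finset.le_max' _ T (Finset.mem_insert_self _ _)
    -- the time grid including 0
    set τ : Fin (m+1) → ℝ := Fin.cons 0 u with hτ
    have hτ0 : ∀ i, 0 ≤ τ i := by
      intro i
      refine Fin.cases ?_ ?_ i
      · simp [hτ]
      · intro j; rw [hτ, Fin.cons_succ]; exact (hu_pos j).le
    have hτmono : StrictMono τ := by
      rw [Fin.strictMono_iff_lt_succ]
      intro i
      obtain ⟨k, hk⟩ := i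
      cases k with
      | zero =>
        have h1 : (Fin.castSucc (⟨0, hk⟩ : Fin m)) = (0 : Fin (m+1)) := Fin.ext rfl
        rw [h1, hτ, Fin.cons_zero, Fin.cons_succ]
        exact hu_pos _
      | succ k =>
        have h1 : Fin.castSucc (⟨k+1, hk⟩ : Fin m)
            = (⟨k, Nat.lt_of_succ_lt hk⟩ : Fin m).succ := Fin.ext rfl
        rw [hτ, h1, Fin.cons_succ, Fin.cons_succ]
        exact hu_strict (by simp [Fin.lt_def])
    -- increments
    set D : Fin m → Ω → ℝ := fun i ω => W (τ i.succ) ω - W (τ i.castSucc) ω with hD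
    have hDindep : iIndepFun (m := fun _ => Real.measurableSpace) D P := hindep m τ hτ0 hτmono
    have hDmeas : ∀ i, Measurable (D i) := fun i => (hmeas _).sub (hmeas _)
    -- telescoping sums
    have tele : ∀ (i : Fin m) (ω : Ω), ∑ l ∈ Finset.Iic i, D l ω = W (u i) ω := by
      intro i ω
      have h := fin_tele (fun j => W (τ j) ω) i
      rw [hD]
      simp only
      rw [h, hτ, Fin.cons_succ, Fin.cons_zero, h0, sub_zero]
    have hilast : Finset.Iic (⟨m - 1, Nat.sub_lt hmpos one_pos⟩ : Fin m) = Finset.univ := by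
      ext l; simp [Fin.le_def]; omega
    have teleT : ∀ (j : Fin m) (ω : Ω), ∑ l ∈ Finset.Ioi j, D l ω = W T ω - W (u j) ω := by
      intro j ω
      have hsplit : Finset.Ioi j = Finset.univ \ Finset.Iic j := by
        ext l; simp [Finset.mem_Ioi, Finset.mem_sdiff, not_le]
      rw [hsplit, Finset.sum_sdiff_eq_sub (Finset.subset_univ _)]
      rw [← hilast, tele, tele, hu_last]
    -- events
    set A : Fin m → Set Ω :=
      fun j => {ω | W (u j) ω ≤ cc ∧ ∀ i : Fin m, i < j → cc < W (u i) ω} with hA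
    set B : Fin m → Set Ω := fun j => {ω | W T ω - W (u j) ω ≤ 0} with hB
    have hAmeas : ∀ j, MeasurableSet (A j) := by
      intro j
      have : A j = (W (u j) ⁻¹' Iic cc) ∩
          ⋂ (i : Fin m), ⋂ (_ : i < j), (W (u i) ⁻¹' Ioi cc) := by
        ext ω; simp [hA, Set.mem_setOf_eq, Set.mem_iInter]
      rw [this]
      exact ((hmeas _) measurableSet_Iic).inter
        (MeasurableSet.iInter fun i => MeasurableSet.iInter fun _ => (hmeas _) measurableSet_Ioi)
    have hBmeas : ∀ j, MeasurableSet (B j) := by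
      intro j
      have : B j = (fun ω => W T ω - W (u j) ω) ⁻¹' Iic 0 := rfl
      rw [this]
      exact ((hmeas T).sub (hmeas _)) measurableSet_Iic
    have hPB : ∀ j, (2:ENNReal)⁻¹ ≤ P (B j) := by
      intro j
      have : P (B j) = gaussianReal 0 (Real.toNNReal (T - u j)) (Iic 0) :=
        hlaw (u j) T (hu_pos j).le (hu_leT j)
      rw [this]
      exact gauss_half_s10 _
    have hdisj' : ∀ i j : Fin m, i < j → Disjoint (A i) (A j) := by
      intro i j hij
      rw [Set.disjoint_left]
      intro ω hi hj
      exact absurd hi.1 (not_le.mpr (hj.2 i hij))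
    have hdisj : Pairwise (Function.onFun Disjoint A) := by
      intro i j hij
      rcases lt_or_gt_of_ne hij with h | h
      · exact hdisj' i j h
      · exact (hdisj' j i h).symm
    have hcover : {ω | ∃ q ∈ F, W q ω ≤ cc} ⊆ ⋃ j, A j := by
      intro ω hω
      obtain ⟨q, hqF, hq⟩ := hω
      have hq0 : 0 < q := by
        rcases lt_or_eq_of_le (hF q hqF).1 with h | h
        · exact h
        · exfalso; rw [← h, h0] at hq; linarith
      have hqF' : q ∈ F' := Finset.mem_insert_of_mem (Finset.mem_filter.mpr ⟨hqF, hq0⟩)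
      obtain ⟨i0, hi0⟩ := hu_surj q hqF'
      classical
      set N : Finset (Fin m) := Finset.univ.filter (fun i => W (u i) ω ≤ cc) with hN
      have hNne : N.Nonempty := ⟨i0, by simp [hN]; rw [hi0]; exact hq⟩
      refine Set.mem_iUnion.mpr ⟨N.min' hNne, ?_, ?_⟩
      · exact (Finset.mem_filter.mp (N.min'_mem hNne)).2
      · intro i hij
        by_contra hcon
        push_neg at hcon
        exact absurd (N.min'_le i (by simp [hN]; exact hcon)) (not_le.mpr hij)
    have hsub : ∀ j, A j ∩ B j ⊆ {ω | W T ω ≤ cc} := by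
      intro j ω hω
      have h1 : W (u j) ω ≤ cc := hω.1.1
      have h2 : W T ω - W (u j) ω ≤ 0 := hω.2
      show W T ω ≤ cc
      linarith
    -- independence
    have hkey : ∀ j, P (A j ∩ B j) = P (A j) * P (B j) := by
      intro j
      classical
      set S : Finset (Fin m) := Finset.Iic j with hS
      set Tt : Finset (Fin m) := Finset.Ioi j with hTt
      have hST : Disjoint S Tt :=
        Finset.disjoint_left.mpr fun i hi hi' =>
          absurd (Finset.mem_Iic.mp hi) (not_le.mpr (Finset.mem_Ioi.mp hi'))
      have base : IndepFun (fun ω (i : S) => D i ω) (fun ω (i : Tt) => D i ω) P :=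
        hDindep.indepFun_finset S Tt hST hDmeas
      have hsum : ∀ (ω : Ω) (i : Fin m), i ≤ j →
          (∑ l : S, if (l : Fin m) ≤ i then D (l : Fin m) ω else 0) = W (u i) ω := by
        intro ω i hij
        rw [Finset.sum_coe_sort S (fun l => if l ≤ i then D l ω else 0)]
        rw [← Finset.sum_filter]
        have : S.filter (fun l => l ≤ i) = Finset.Iic i := by
          ext l
          simp only [hS, Finset.mem_filter, Finset.mem_Iic]
          exact ⟨fun h => h.2, fun h => ⟨h.trans hij, h⟩⟩
        rw [this, tele]
      have hsumT : ∀ (ω : Ω), (∑ l : Tt, D (l : Fin m) ω) = W T ω - W (u j) ω := by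
        intro ω
        rw [Finset.sum_coe_sort Tt (fun l => D l ω)]
        exact teleT j ω
      set MA : Set (S → ℝ) := {y | (∑ l : S, if (l : Fin m) ≤ j then y l else 0) ≤ cc ∧
        ∀ i : S, (i : Fin m) < j → cc < ∑ l : S, if (l : Fin m) ≤ (i : Fin m) then y l else 0}
        with hMAdef
      set MB : Set (Tt → ℝ) := {y | ∑ l : Tt, y l ≤ 0} with hMBdef
      have hsummeas : ∀ i : Fin m, Measurable (fun y : S → ℝ =>
          ∑ l : S, if (l : Fin m) ≤ i then y l else 0) := by
        intro i
        apply Finset.measurable_sum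
        intro l _
        by_cases hc : (l : Fin m) ≤ i
        · simpa [hc] using measurable_pi_apply l
        · simp [hc]
      have hMA : MeasurableSet MA := by
        have hMAeq : MA = {y : S → ℝ | (∑ l : S, if (l : Fin m) ≤ j then y l else 0) ≤ cc} ∩
            ⋂ (i : S), ⋂ (_ : (i : Fin m) < j),
              {y : S → ℝ | cc < ∑ l : S, if (l : Fin m) ≤ (i : Fin m) then y l else 0} := by
          ext y
          simp [hMAdef, Set.mem_setOf_eq, Set.mem_iInter]
        rw [hMAeq]
        exact (measurableSet_le (hsummeas j) measurable_const).inter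
          (MeasurableSet.iInter fun i => MeasurableSet.iInter fun _ =>
            measurableSet_lt measurable_const (hsummeas i))
      have hMB : MeasurableSet MB :=
        measurableSet_le (Finset.measurable_sum _ fun l _ => measurable_pi_apply l)
          measurable_const
      have hApre : A j = (fun ω (i : S) => D i ω) ⁻¹' MA := by
        ext ω
        simp only [hA, Set.mem_setOf_eq, Set.mem_preimage, hMAdef]
        constructor
        · rintro ⟨h1, h2⟩
          constructor
          · rw [hsum ω j le_rfl]; exact h1
          · intro i hi
            rw [hsum ω i (Finset.mem_Iic.mp i.2)]
            exact h2 i hi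
        · rintro ⟨h1, h2⟩
          rw [hsum ω j le_rfl] at h1
          refine ⟨h1, fun i hi => ?_⟩
          have := h2 ⟨i, Finset.mem_Iic.mpr hi.le⟩ hi
          rwa [hsum ω i hi.le] at this
      have hBpre : B j = (fun ω (i : Tt) => D i ω) ⁻¹' MB := by
        ext ω
        simp only [hB, Set.mem_setOf_eq, Set.mem_preimage, hMBdef]
        rw [hsumT ω]
      rw [hApre, hBpre]
      exact base.measure_inter_preimage_eq_mul MA MB hMA hMB
    -- assembly
    have hstep1 : P {ω | ∃ q ∈ F, W q ω ≤ cc} ≤ ∑ j : Fin m, P (A j) := by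
      refine le_trans (measure_mono hcover) ?_
      rw [measure_iUnion hdisj hAmeas, tsum_fintype]
    have hstep2 : ∀ j, P (A j) ≤ 2 * P (A j ∩ B j) := by
      intro j
      rw [hkey j]
      calc P (A j) = 2 * (P (A j) * 2⁻¹) := by
            rw [mul_comm (P (A j)) _, ← mul_assoc, ENNReal.mul_inv_cancel (by norm_num) (by norm_num), one_mul]
        _ ≤ 2 * (P (A j) * P (B j)) :=
            mul_le_mul_right (mul_le_mul_right (hPB j) _) 2
    calc P {ω | ∃ q ∈ F, W q ω ≤ cc} ≤ ∑ j : Fin m, P (A j) := hstep1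
      _ ≤ ∑ j : Fin m, 2 * P (A j ∩ B j) := Finset.sum_le_sum fun j _ => hstep2 j
      _ = 2 * ∑ j : Fin m, P (A j ∩ B j) := by rw [Finset.mul_sum]
      _ = 2 * P (⋃ j, A j ∩ B j) := by
          rw [measure_iUnion ?_ (fun j => (hAmeas j).inter (hBmeas j)), tsum_fintype]
          intro i j hij
          exact (hdisj hij).mono Set.inter_subset_left Set.inter_subset_left
      _ ≤ 2 * P {ω | W T ω ≤ cc} :=
          mul_le_mul_right (measure_mono (Set.iUnion_subset hsub)) 2

lemma sup_bound {Ω : Type*} [MeasurableSpace Ω] (P : Measure Ω) [IsProbabilityMeasure P]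
    (W : ℝ → Ω → ℝ) (hmeas : ∀ t, Measurable (W t)) (h0 : ∀ ω, W 0 ω = 0)
    (hcont : ∀ ω, ContinuousOn (fun t => W t ω) (Ici 0))
    (hgauss : ∀ s t : ℝ, 0 ≤ s → s ≤ t →
      Measure.map (fun ω => W t ω - W s ω) P = gaussianReal 0 (Real.toNNReal (t - s)))
    (hindep : ∀ n : ℕ, ∀ τ : Fin (n + 1) → ℝ, (∀ i, 0 ≤ τ i) → StrictMono τ →
      iIndepFun (m := fun _ => Real.measurableSpace)
        (fun i : Fin n => fun ω => W (τ i.succ) ω - W (τ i.castSucc) ω) P)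
    (T a : ℝ) (hT : 0 < T) (ha : 0 < a) :
    P {ω | ∃ s ∈ Icc (0:ℝ) T, W s ω ≤ -a} ≤
      2 * gaussianReal 0 (Real.toNNReal T) (Iic (-a)) := by
  classical
  have hlawT : ∀ c : ℝ, P {ω | W T ω ≤ c} = gaussianReal 0 (Real.toNNReal T) (Iic c) := by
    intro c
    have he : (fun ω => W T ω - W 0 ω) = W T := by funext ω; rw [h0, sub_zero]
    have hmap := hgauss 0 T le_rfl hT.le
    rw [he, sub_zero] at hmap
    rw [← hmap, Measure.map_apply (hmeas T) measurableSet_Iic]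
    rfl
  obtain ⟨e, he⟩ : ∃ f : ℕ → ℚ, Function.Surjective f := exists_surjective_nat ℚ
  set r : ℕ → ℝ := fun n => ((e n : ℚ) : ℝ) with hr
  have hrsurj : ∀ q : ℚ, ∃ n, r n = (q : ℝ) := by
    intro q
    obtain ⟨n, rfl⟩ := he q
    exact ⟨n, rfl⟩
  set c : ℕ → ℝ := fun n => -a + 1/(n+1) with hc
  set G : ℕ → ℕ → Set Ω := fun n k => {ω | r k ∈ Icc (0:ℝ) T ∧ W (r k) ω < c n} with hG
  have hGmeas : ∀ n k, MeasurableSet (G n k) := by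
    intro n k
    by_cases hk : r k ∈ Icc (0:ℝ) T
    · have : G n k = (W (r k)) ⁻¹' (Iio (c n)) := by
        ext ω
        simp only [hG, Set.mem_setOf_eq, Set.mem_preimage, mem_Iio]
        exact ⟨fun h => h.2, fun h => ⟨hk, h⟩⟩
      rw [this]; exact (hmeas _) measurableSet_Iio
    · have : G n k = ∅ := by
        ext ω
        simp only [hG, Set.mem_setOf_eq, Set.mem_empty_iff_false, iff_false]
        exact fun h => hk h.1
      rw [this]; exact MeasurableSet.empty
  -- inclusion into each E n
  have hincl : ∀ n, {ω | ∃ s ∈ Icc (0:ℝ) T, W s ω ≤ -a} ⊆ ⋃ k, G n k := by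
    intro n ω hω
    obtain ⟨s, hs, hWs⟩ := hω
    have hs0 : 0 < s := by
      rcases lt_or_eq_of_le hs.1 with h | h
      · exact h
      · exfalso; rw [← h, h0] at hWs; linarith
    have hεpos : (0:ℝ) < 1/(n+1) := by positivity
    have hcw : ContinuousWithinAt (fun t => W t ω) (Ici 0) s := (hcont ω) s hs.1
    have hpre : (fun t => W t ω) ⁻¹' (Iio (c n)) ∈ nhdsWithin s (Ici 0) := by
      apply hcw
      apply Iio_mem_nhds
      rw [hc]; simp only; linarith
    rw [Metric.mem_nhdsWithin_iff] at hpre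
    obtain ⟨δ, hδ, hball⟩ := hpre
    have hlt : max (s - δ) 0 < s := by
      rcases max_cases (s - δ) 0 with ⟨h1, _⟩ | ⟨h1, _⟩ <;> rw [h1] <;> linarith
    obtain ⟨q, hq1, hq2⟩ := exists_rat_btwn hlt
    obtain ⟨k, hk⟩ := hrsurj q
    have hq0 : (0:ℝ) ≤ q := le_of_lt (lt_of_le_of_lt (le_max_right _ _) hq1)
    have hqT : (q:ℝ) ≤ T := le_of_lt (lt_of_lt_of_le hq2 hs.2)
    have hqball : (q:ℝ) ∈ Metric.ball s δ ∩ Ici 0 := by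
      constructor
      · rw [Real.ball_eq_Ioo]
        exact ⟨lt_of_le_of_lt (le_max_left _ _) hq1, hq2.trans (by linarith)⟩
      · exact hq0
    have hWq : W (q:ℝ) ω < c n := hball hqball
    exact Set.mem_iUnion.mpr ⟨k, by rw [hG]; exact ⟨by rw [hk]; exact ⟨hq0, hqT⟩, by rw [hk]; exact hWq⟩⟩
  -- bound P of each E n via levy
  have hEn : ∀ n, P (⋃ k, G n k) ≤ 2 * gaussianReal 0 (Real.toNNReal T) (Iic (c n)) := by
    intro n
    rw [← hlawT (c n)]
    have hmono : Monotone (fun N => ⋃ k ∈ Finset.range N, G n k) := by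
      intro N M hNM
      apply Set.iUnion_mono
      intro k
      exact Set.iUnion_subset fun hk => Set.subset_iUnion_of_subset
        (Finset.mem_range.mpr (lt_of_lt_of_le (Finset.mem_range.mp hk) hNM)) (subset_refl _)
    have hUeq : (⋃ k, G n k) = ⋃ N, ⋃ k ∈ Finset.range N, G n k := by
      ext ω
      simp only [Set.mem_iUnion]
      constructor
      · rintro ⟨k, hk⟩; exact ⟨k+1, k, Finset.mem_range.mpr (Nat.lt_succ_self k), hk⟩
      · rintro ⟨N, k, _, hk⟩; exact ⟨k, hk⟩
    rw [hUeq, (Monotone.directed_le hmono).measure_iUnion]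
    apply iSup_le
    intro N
    set F : Finset ℝ := ((Finset.range N).filter (fun k => r k ∈ Icc (0:ℝ) T)).image r with hF
    have hFmem : ∀ q ∈ F, 0 ≤ q ∧ q ≤ T := by
      intro q hq
      obtain ⟨k, hk, rfl⟩ := Finset.mem_image.mp hq
      have := (Finset.mem_filter.mp hk).2
      exact ⟨this.1, this.2⟩
    refine le_trans (measure_mono ?_) (levy P W hmeas h0 hgauss hindep T hT F hFmem (c n))
    intro ω hω
    obtain ⟨k, hk⟩ := Set.mem_iUnion.mp hω
    obtain ⟨hkN, hkG⟩ := Set.mem_iUnion.mp hk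
    refine ⟨r k, Finset.mem_image.mpr ⟨k, Finset.mem_filter.mpr ⟨hkN, hkG.1⟩, rfl⟩, hkG.2.le⟩
  -- pass to the limit in n
  have hiInter : (⋂ n, Iic (c n)) = Iic (-a) := by
    ext x
    simp only [Set.mem_iInter, Set.mem_Iic]
    constructor
    · intro h
      by_contra hx
      push_neg at hx
      obtain ⟨n, hn⟩ := exists_nat_one_div_lt (show (0:ℝ) < x - (-a) by linarith)
      have := h n
      rw [hc] at this
      simp only at this
      linarith
    · intro h n
      rw [hc]; simp only
      linarith [le_of_lt (show (0:ℝ) < 1/(n+1) by positivity)]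
  have hanti : Antitone (fun n => Iic (c n)) := by
    intro n m hnm
    apply Iic_subset_Iic.mpr
    rw [hc]; simp only
    have : (1:ℝ)/(m+1) ≤ 1/(n+1) := by
      apply one_div_le_one_div_of_le (by positivity)
      exact_mod_cast by omega
    linarith
  have htend : Filter.Tendsto (fun n => 2 * gaussianReal 0 (Real.toNNReal T) (Iic (c n)))
      Filter.atTop (nhds (2 * gaussianReal 0 (Real.toNNReal T) (Iic (-a)))) := by
    rw [← hiInter]
    apply ENNReal.Tendsto.const_mul
    · exact tendsto_measure_iInter_atTop (fun n => measurableSet_Iic.nullMeasurableSet) hanti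
        ⟨0, measure_ne_top _ _⟩
    · right; norm_num
  apply ge_of_tendsto htend
  filter_upwards with n
  exact le_trans (measure_mono (hincl n)) (hEn n)

end Aux

open Real NNReal in

/-- With `X^λ_s = W_s − s²/2 + λs` and `L_λ = sup(Z^λ ∩ [0,1))` the last time before `1`
at which `X^λ` attains its running infimum, there exist `c > 0`, `x₀` and `λ₀` such that
for all `x > x₀` and `λ ≥ λ₀`, `P(L_λ ≥ x/λ²) ≤ e^{−cx}`. -/
theorem left_endpoint_tail {Ω : Type*} [MeasurableSpace Ω] (P : Measure Ω)
    (W : ℝ → Ω → ℝ) (hW : IsStdBrownianMotion P W) :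
    ∃ c > (0 : ℝ), ∃ x0 lam0 : ℝ, ∀ x : ℝ, x0 < x → ∀ lam : ℝ, lam0 ≤ lam →
      P {ω | x / lam ^ 2 ≤
          sSup (runInfSet (fun u => W u ω - u ^ 2 / 2) lam ∩ Ico 0 1)} ≤
        ENNReal.ofReal (Real.exp (-c * x)) := by
  obtain ⟨hprob, hmeas, h0, hcont, hgauss, hindep⟩ := hW
  haveI := hprob
  refine ⟨1/64, by norm_num, 200, 1, ?_⟩
  intro x hx lam hlam
  have hlam0 : (0:ℝ) < lam := lt_of_lt_of_le one_pos hlam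
  set t : ℝ := x / lam ^ 2 with htdef
  have hxpos : (0:ℝ) < x := by linarith
  have ht : 0 < t := by positivity
  have hxt : lam ^ 2 * t = x := by rw [htdef]; field_simp
  -- blocks
  set a : ℕ → ℝ := fun k => lam * t * 2^k / 4 with ha
  have hapos : ∀ k, 0 < a k := fun k => by positivity
  set Blk : ℕ → Set Ω := fun k => {ω | ∃ s ∈ Icc (0:ℝ) (t * 2^k), W s ω ≤ -(a k)} with hBlk
  -- covering
  have hcover : {ω | t ≤ sSup (runInfSet (fun u => W u ω - u ^ 2 / 2) lam ∩ Ico 0 1)}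
      ⊆ ⋃ k, Blk k := by
    intro ω hω
    simp only [Set.mem_setOf_eq] at hω
    set ω' : ℝ → ℝ := fun u => W u ω - u ^ 2 / 2 with hω'
    set S : Set ℝ := runInfSet ω' lam ∩ Ico 0 1 with hSdef
    have hS0 : (0:ℝ) ∈ S := by
      constructor
      · refine ⟨le_rfl, ?_⟩
        rw [Set.Icc_self, Set.image_singleton, csInf_singleton]
      · exact ⟨le_rfl, one_pos⟩
    have hSne : S.Nonempty := ⟨0, hS0⟩
    have hlt : t/2 < sSup S := lt_of_lt_of_le (by linarith) hω
    obtain ⟨s, hsS, hs⟩ := exists_lt_of_lt_csSup hSne hlt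
    obtain ⟨⟨hs0, heq⟩, hs0', hs1⟩ := hsS
    -- the running infimum is at most the value at 0
    have hfc : ContinuousOn (fun r => ω' r + lam * r) (Icc 0 s) := by
      apply ContinuousOn.add
      · apply ContinuousOn.sub
        · exact (hcont ω).mono (fun r hr => hr.1)
        · exact (continuous_pow 2).continuousOn.div_const 2
      · exact (continuous_const.mul continuous_id).continuousOn
    have hbdd : BddBelow ((fun r => ω' r + lam * r) '' Icc 0 s) :=
      ((isCompact_Icc).image_of_continuousOn hfc).bddBelow
    have hmem0 : ω' 0 + lam * 0 ∈ (fun r => ω' r + lam * r) '' Icc 0 s :=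
      ⟨0, ⟨le_rfl, hs0⟩, rfl⟩
    have hinf : ω' s + lam * s ≤ ω' 0 + lam * 0 := heq ▸ csInf_le hbdd hmem0
    have hval0 : ω' 0 + lam * 0 = 0 := by
      rw [hω']; simp [h0 ω]
    rw [hval0] at hinf
    -- hence W s ω ≤ - s * lam / 2
    have hWs : W s ω ≤ -(s * lam / 2) := by
      have h1 : W s ω - s^2/2 + lam * s ≤ 0 := hinf
      nlinarith [sq_nonneg s, hs1.le, hs0, hlam]
    -- find the block
    have hex : ∃ k : ℕ, s ≤ t * 2^k := by
      obtain ⟨k, hk⟩ := pow_unbounded_of_one_lt (s/t) (one_lt_two (α := ℝ))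
      exact ⟨k, by rw [div_lt_iff₀ ht] at hk; nlinarith⟩
    classical
    set k0 := Nat.find hex with hk0
    have hk0le : s ≤ t * 2^k0 := Nat.find_spec hex
    have hk0half : t * 2^k0 < 2 * s := by
      rcases Nat.eq_zero_or_pos k0 with h | h
      · rw [h]; simp; linarith
      · obtain ⟨j, hj⟩ := Nat.exists_eq_succ_of_ne_zero (Nat.pos_iff_ne_zero.mp h)
        have hmin := Nat.find_min hex (show j < Nat.find hex by rw [← hk0, hj]; exact Nat.lt_succ_self j)
        push_neg at hmin
        rw [hj, pow_succ]
        nlinarith [hmin]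
    refine Set.mem_iUnion.mpr ⟨k0, s, ⟨hs0, hk0le⟩, ?_⟩
    have : a k0 ≤ s * lam / 2 := by
      rw [ha]
      simp only
      nlinarith
    linarith
  -- bound each block
  have hblk : ∀ k, P (Blk k) ≤ 2 * ENNReal.ofReal (Real.exp (-(x * (k+1))/32)) := by
    intro k
    have hTk : (0:ℝ) < t * 2^k := by positivity
    have h1 := sup_bound P W hmeas h0 hcont hgauss hindep (t * 2^k) (a k) hTk (hapos k)
    have h2 : gaussianReal 0 (Real.toNNReal (t * 2^k)) (Iic (-(a k)))
        ≤ ENNReal.ofReal (Real.exp (-((a k)^2)/(2*(Real.toNNReal (t * 2^k))))) := by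
      apply gauss_tail_s10 _ (hapos k)
      rw [Real.coe_toNNReal _ hTk.le, ha]
      simp only
      have h2k : (1:ℝ) ≤ 2^k := one_le_pow₀ (by norm_num : (1:ℝ) ≤ 2)
      -- t * 2^k ≤ (lam*t*2^k/4)^2  ⟺ 16 ≤ lam^2 * t * 2^k = x * 2^k
      have hx16 : (16:ℝ) ≤ x * 2^k := by nlinarith
      have hexp : (lam * t * 2^k/4)^2 = lam^2 * t * 2^k * (t * 2^k) / 16 := by ring
      rw [hexp, hxt]
      rw [le_div_iff₀ (by norm_num : (0:ℝ) < 16)]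
      nlinarith [hTk]
    have h3 : -((a k)^2)/(2*((Real.toNNReal (t * 2^k)):ℝ)) = -(x * 2^k)/32 := by
      rw [Real.coe_toNNReal _ hTk.le, ha]
      simp only
      rw [show (lam * t * 2^k/4)^2 = lam^2 * t * 2^k * (t * 2^k) / 16 by ring, hxt]
      field_simp
      ring
    rw [h3] at h2
    have h4 : Real.exp (-(x * 2^k)/32) ≤ Real.exp (-(x * (k+1))/32) := by
      apply Real.exp_le_exp.mpr
      have hk2 : ((k:ℝ)+1) ≤ 2^k := by
        exact_mod_cast Nat.succ_le_of_lt (Nat.lt_two_pow_self (n := k))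
      have : x * (k+1) ≤ x * 2^k := by nlinarith
      linarith [this]
    exact h1.trans (mul_le_mul_right (h2.trans (ENNReal.ofReal_le_ofReal h4)) 2)
  -- sum the geometric series
  set q : ℝ := Real.exp (-x/32) with hq
  have hq0 : 0 < q := Real.exp_pos _
  have hq1 : q < 1 := by
    rw [hq, Real.exp_lt_one_iff]
    linarith
  have hqk : ∀ k : ℕ, Real.exp (-(x * (k+1))/32) = q^(k+1) := by
    intro k
    rw [hq, ← Real.exp_nat_mul]
    congr 1
    push_cast
    ring
  have hsummable : Summable (fun k : ℕ => q^(k+1)) := by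
    apply Summable.congr ((summable_geometric_of_lt_one hq0.le hq1).mul_left q)
    intro k
    rw [pow_succ, mul_comm]
  have htsum : ∑' k : ℕ, q^(k+1) = q * (1-q)⁻¹ := by
    have h1 : (fun k : ℕ => q^(k+1)) = (fun k : ℕ => q * q^k) := by
      funext k; rw [pow_succ, mul_comm]
    rw [h1, Summable.tsum_mul_left q (summable_geometric_of_lt_one hq0.le hq1), tsum_geometric_of_lt_one hq0.le hq1]
  have hfinal : 2 * (q * (1-q)⁻¹) ≤ Real.exp (-(1/64) * x) := by
    have hqhalf : q ≤ 1/2 := by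
      have hee := Real.add_one_le_exp (x/32)
      rw [hq, show (-x/32 : ℝ) = -(x/32) by ring, Real.exp_neg]
      rw [inv_le_comm₀ (Real.exp_pos _) (by norm_num)]
      norm_num
      linarith
    have hinv : (1-q)⁻¹ ≤ 2 := by
      have h1q : (1:ℝ)/2 ≤ 1 - q := by linarith
      calc (1-q)⁻¹ ≤ ((1:ℝ)/2)⁻¹ := by
            apply inv_anti₀ (by norm_num) h1q
        _ = 2 := by norm_num
    have h4exp : (4:ℝ) ≤ Real.exp (x/64) := by
      have := Real.add_one_le_exp (x/64)
      linarith
    calc 2 * (q * (1-q)⁻¹) ≤ 2 * (q * 2) := by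
          apply mul_le_mul_of_nonneg_left _ (by norm_num)
          apply mul_le_mul_of_nonneg_left hinv hq0.le
      _ = 4 * q := by ring
      _ ≤ Real.exp (x/64) * q := mul_le_mul_of_nonneg_right h4exp hq0.le
      _ = Real.exp (-(1/64) * x) := by
          rw [hq, ← Real.exp_add]
          congr 1
          ring
  calc P {ω | x / lam ^ 2 ≤ sSup (runInfSet (fun u => W u ω - u ^ 2 / 2) lam ∩ Ico 0 1)}
      ≤ P (⋃ k, Blk k) := measure_mono hcover
    _ ≤ ∑' k : ℕ, P (Blk k) := measure_iUnion_le _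
    _ ≤ ∑' k : ℕ, 2 * ENNReal.ofReal (Real.exp (-(x * (k+1))/32)) :=
        ENNReal.tsum_le_tsum fun k => hblk k
    _ = 2 * ∑' k : ℕ, ENNReal.ofReal (q^(k+1)) := by
        rw [← ENNReal.tsum_mul_left]
        congr 1
        funext k
        rw [hqk k]
    _ = 2 * ENNReal.ofReal (q * (1-q)⁻¹) := by
        rw [← ENNReal.ofReal_tsum_of_nonneg (fun k => by positivity) hsummable, htsum]
    _ = ENNReal.ofReal (2 * (q * (1-q)⁻¹)) := by
        rw [ENNReal.ofReal_mul (by norm_num : (0:ℝ) ≤ 2)]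
        norm_num
    _ ≤ ENNReal.ofReal (Real.exp (-(1/64) * x)) := ENNReal.ofReal_le_ofReal hfinal
end

section
/- Let (X, d) be a set with a symmetric function d : X × X → [0,∞] vanishing on the diagonal, a base point 0 ∈ X, and Gromov product (x·y)₀ = (d(0,x)+d(0,y)−d(x,y))/2. Suppose that for all x, y, z ∈ X the four-point condition (x·y)₀ ≥ min{(x·z)₀, (z·y)₀} holds and d satisfies the triangle inequality. If the induced quotient metric space is connected, then it is 0-hyperbolic, and a complete, connected, 0-hyperbolic metric space is a real tree. -/
open Set
open scoped ENNReal

/-- A real tree: a geodesic metric space in which any two injective paths between the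
same endpoints have the same range (unique arcs). -/
def IsRealTree (T : Type*) [MetricSpace T] : Prop :=
  (∀ x y : T, ∃ f : ℝ → T, f 0 = x ∧ f (dist x y) = y ∧
    ∀ s ∈ Icc (0 : ℝ) (dist x y), ∀ u ∈ Icc (0 : ℝ) (dist x y),
      dist (f s) (f u) = |s - u|) ∧
  (∀ x y : T, ∀ γ₁ γ₂ : Path x y, Function.Injective γ₁ → Function.Injective γ₂ →
    Set.range γ₁ = Set.range γ₂)

namespace RealTreeAux

variable {T : Type*} [MetricSpace T]

/-- Gromov product based at `p`. -/
noncomputable def gpr (p a b : T) : ℝ := (dist p a + dist p b - dist a b) / 2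

lemma gpr_symm (p a b : T) : gpr p a b = gpr p b a := by
  simp only [gpr, dist_comm a b]; ring

lemma gpr_nonneg (p a b : T) : 0 ≤ gpr p a b := by
  have h := dist_triangle a p b
  rw [dist_comm a p] at h
  simp only [gpr]
  linarith

lemma key {α β γ δ ε ζ : ℝ} (h1 : min γ ζ ≤ α) (h2 : min ε δ ≤ α)
    (h3 : min γ ε ≤ β) (h4 : min ζ δ ≤ β) :
    min (γ + δ) (ε + ζ) ≤ α + β := by
  rcases min_le_iff.1 h1 with h1 | h1 <;> rcases min_le_iff.1 h2 with h2 | h2 <;>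
    rcases min_le_iff.1 h3 with h3 | h3 <;> rcases min_le_iff.1 h4 with h4 | h4 <;>
    rcases le_total α β with hab | hab <;>
    first
      | exact min_le_of_left_le (by linarith)
      | exact min_le_of_right_le (by linarith)

/-- The four-point condition from 0-hyperbolicity at a single base point. -/
lemma fourpt (p : T) (hyp : ∀ a b c : T, min (gpr p a c) (gpr p c b) ≤ gpr p a b) :
    ∀ x y z w : T, dist x y + dist z w ≤ max (dist x z + dist y w) (dist x w + dist y z) := by
  intro x y z w
  have h1 : min (gpr p x z) (gpr p y z) ≤ gpr p x y := by
    have := hyp x y z; rwa [gpr_symm p z y] at this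
  have h2 : min (gpr p x w) (gpr p y w) ≤ gpr p x y := by
    have := hyp x y w; rwa [gpr_symm p w y] at this
  have h3 : min (gpr p x z) (gpr p x w) ≤ gpr p z w := by
    have := hyp z w x; rwa [gpr_symm p z x] at this
  have h4 : min (gpr p y z) (gpr p y w) ≤ gpr p z w := by
    have := hyp z w y; rwa [gpr_symm p z y] at this
  have k := key h1 h2 h3 h4
  simp only [gpr] at k
  rcases min_le_iff.1 k with h | h
  · exact le_max_of_le_left (by linarith)
  · exact le_max_of_le_right (by linarith)

/-- From the four-point condition, 0-hyperbolicity at every base point. -/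
lemma hypAt
    (h4 : ∀ x y z w : T, dist x y + dist z w ≤ max (dist x z + dist y w) (dist x w + dist y z))
    (b u v w : T) : min (gpr b u w) (gpr b w v) ≤ gpr b u v := by
  have h := h4 u v w b
  have e1 := dist_comm b u; have e2 := dist_comm b v; have e3 := dist_comm b w
  have e4 := dist_comm u v; have e5 := dist_comm u w; have e6 := dist_comm w v
  rcases le_max_iff.1 h with h' | h'
  · exact min_le_of_left_le (by simp only [gpr]; linarith)
  · exact min_le_of_right_le (by simp only [gpr]; linarith)



/-- Parameter of `z` along the (virtual) segment from `x` to `y`. -/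
noncomputable def Ft (x y z : T) : ℝ := (dist x y + dist x z - dist y z) / 2

/-- Excess (height above the virtual segment) of `z` relative to `x, y`. -/
noncomputable def ex (x y z : T) : ℝ := (dist x z + dist y z - dist x y) / 2

lemma ex_nonneg (x y z : T) : 0 ≤ ex x y z := by
  have h := dist_triangle x z y
  rw [dist_comm z y] at h
  simp only [ex]; linarith

lemma dist_eq_Ft_add_ex (x y z : T) : dist x z = Ft x y z + ex x y z := by
  simp only [Ft, ex]; ring

lemma dist_eq_sub_Ft (x y z : T) : dist y z = dist x y - Ft x y z + ex x y z := by
  simp only [Ft, ex]; ring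

lemma Ft_self_left (x y : T) : Ft x y x = 0 := by
  simp only [Ft, dist_self, dist_comm y x]; ring

lemma Ft_self_right (x y : T) : Ft x y y = dist x y := by
  simp only [Ft, dist_self]; ring

lemma ex_self_left (x y : T) : ex x y x = 0 := by
  simp only [ex, dist_self, dist_comm y x]; ring

lemma ex_self_right (x y : T) : ex x y y = 0 := by
  simp only [ex, dist_self]; ring

lemma continuous_Ft (x y : T) : Continuous fun z => Ft x y z := by
  unfold Ft; fun_prop

lemma continuous_ex (x y : T) : Continuous fun z => ex x y z := by
  unfold ex; fun_prop

variable (h4 : ∀ x y z w : T,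
  dist x y + dist z w ≤ max (dist x z + dist y w) (dist x w + dist y z))
include h4

lemma dist_up (x y z w : T) :
    dist z w ≤ |Ft x y z - Ft x y w| + ex x y z + ex x y w := by
  have h := h4 x y z w
  rcases abs_cases (Ft x y z - Ft x y w) with ⟨h1, h2⟩ | ⟨h1, h2⟩ <;> rw [h1] <;>
    rcases le_total (dist x z + dist y w) (dist x w + dist y z) with hm | hm <;>
    [rw [max_eq_right hm] at h; rw [max_eq_left hm] at h;
     rw [max_eq_right hm] at h; rw [max_eq_left hm] at h] <;>
    simp only [Ft, ex] at * <;> linarith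

lemma dist_low {x y z w : T} (hlt : Ft x y z < Ft x y w) :
    Ft x y w - Ft x y z + ex x y z + ex x y w ≤ dist z w := by
  have h := h4 x w z y
  have e1 := dist_comm z y; have e2 := dist_comm w y; have e3 := dist_comm w z
  rcases le_total (dist x z + dist w y) (dist x y + dist w z) with hm | hm <;>
    [rw [max_eq_right hm] at h; rw [max_eq_left hm] at h] <;>
    simp only [Ft, ex] at * <;> linarith

lemma between_exists [CompleteSpace T] [ConnectedSpace T] (x y : T) (t : ℝ)
    (h0 : 0 ≤ t) (hD : t ≤ dist x y) :
    ∃ z, dist x z = t ∧ dist y z = dist x y - t := by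
  have hFc := continuous_Ft (T := T) x y
  have hec := continuous_ex (T := T) x y
  have claim : ∀ ε > (0:ℝ), ∃ z, Ft x y z = t ∧ ex x y z < ε := by
    intro ε hε
    have hmem : t ∈ Icc (Ft x y x) (Ft x y y) := by
      rw [Ft_self_left, Ft_self_right]; exact ⟨h0, hD⟩
    obtain ⟨z₀, -, hz₀⟩ := (isPreconnected_univ (α := T)).intermediate_value
      (mem_univ x) (mem_univ y) hFc.continuousOn hmem
    by_contra hcon
    push_neg at hcon
    rcases eq_or_lt_of_le h0 with ht0 | ht0
    · exact absurd (by rw [ex_self_left]; exact hε)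
        (not_lt.2 (hcon x (by rw [Ft_self_left, ht0])))
    rcases eq_or_lt_of_le hD with htD | htD
    · exact absurd (by rw [ex_self_right]; exact hε)
        (not_lt.2 (hcon y (by rw [Ft_self_right, htD])))
    set u : Set T := {z | Ft x y z ≠ t} with hu_def
    set v : Set T := {z | Ft x y z = t} with hv_def
    have hu : IsOpen u := isOpen_compl_singleton.preimage hFc
    have hv : IsOpen v := by
      rw [Metric.isOpen_iff]
      intro w hw
      refine ⟨ε, hε, fun z hz => ?_⟩
      rw [Metric.mem_ball] at hz
      by_contra hne
      have hew : ε ≤ ex x y w := hcon w hw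
      have hz0 := ex_nonneg x y z
      rcases lt_or_gt_of_ne (hne : Ft x y z ≠ t) with hlt | hgt
      · have := dist_low h4 (x := x) (y := y) (z := z) (w := w) (by rw [hw]; exact hlt)
        rw [hw] at this; linarith
      · have := dist_low h4 (x := x) (y := y) (z := w) (w := z) (by rw [hw]; exact hgt)
        rw [hw, dist_comm w z] at this; linarith
    obtain ⟨z, -, hz1, hz2⟩ := isPreconnected_univ (α := T) u v hu hv
      (fun z _ => by by_cases hz : Ft x y z = t; exacts [Or.inr hz, Or.inl hz])
      ⟨x, mem_univ _, by simp only [hu_def, mem_setOf_eq, Ft_self_left]; exact ht0.ne⟩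
      ⟨z₀, mem_univ _, hz₀⟩
    exact hz1 hz2
  have hseq : ∀ n : ℕ, ∃ z, Ft x y z = t ∧ ex x y z < 1 / (n + 1) :=
    fun n => claim _ (by positivity)
  choose zf hF he using hseq
  have htend : Filter.Tendsto (fun n : ℕ => 2 / ((n : ℝ) + 1)) Filter.atTop (nhds 0) := by
    have := tendsto_one_div_add_atTop_nhds_zero_nat.const_mul (2:ℝ)
    simpa [mul_one_div, div_eq_mul_inv] using this
  have hcauchy : CauchySeq zf := by
    apply cauchySeq_of_le_tendsto_0 (fun n : ℕ => 2 / ((n : ℝ) + 1)) _ htend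
    intro n m N hn hm
    have h1 := dist_up h4 x y (zf n) (zf m)
    rw [hF n, hF m, sub_self, abs_zero] at h1
    have h2 : ex x y (zf n) < 1 / (N + 1) :=
      lt_of_lt_of_le (he n) (by
        apply one_div_le_one_div_of_le (by positivity)
        exact add_le_add_left (Nat.cast_le.2 hn) 1)
    have h3 : ex x y (zf m) < 1 / (N + 1) :=
      lt_of_lt_of_le (he m) (by
        apply one_div_le_one_div_of_le (by positivity)
        exact add_le_add_left (Nat.cast_le.2 hm) 1)
    have : 2 / ((N : ℝ) + 1) = 1 / (N + 1) + 1 / (N + 1) := by ring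
    linarith
  obtain ⟨z, hz⟩ := cauchySeq_tendsto_of_complete hcauchy
  have hFz : Ft x y z = t := by
    have h1 : Filter.Tendsto (fun n => Ft x y (zf n)) Filter.atTop (nhds (Ft x y z)) :=
      (hFc.tendsto z).comp hz
    simp only [hF] at h1
    exact tendsto_nhds_unique h1 tendsto_const_nhds
  have hez : ex x y z = 0 := by
    have h1 : Filter.Tendsto (fun n => ex x y (zf n)) Filter.atTop (nhds (ex x y z)) :=
      (hec.tendsto z).comp hz
    have h2 : Filter.Tendsto (fun n => ex x y (zf n)) Filter.atTop (nhds 0) := by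
      apply squeeze_zero (fun n => ex_nonneg x y (zf n)) (fun n => (he n).le)
      exact tendsto_one_div_add_atTop_nhds_zero_nat
    exact tendsto_nhds_unique h1 h2
  refine ⟨z, ?_, ?_⟩
  · rw [dist_eq_Ft_add_ex x y z, hFz, hez, add_zero]
  · rw [dist_eq_sub_Ft x y z, hFz, hez, add_zero]

lemma exists_geod [CompleteSpace T] [ConnectedSpace T] (x y : T) :
    ∃ f : ℝ → T, f 0 = x ∧ f (dist x y) = y ∧
      ∀ s ∈ Icc (0 : ℝ) (dist x y), ∀ u ∈ Icc (0 : ℝ) (dist x y),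
        dist (f s) (f u) = |s - u| := by
  classical
  have bex := between_exists h4 x y
  set D := dist x y with hd
  set f : ℝ → T := fun t => if h : t ∈ Icc (0:ℝ) D then Classical.choose (bex t h.1 h.2) else x
    with hf
  have spec : ∀ t, ∀ h : t ∈ Icc (0:ℝ) D, dist x (f t) = t ∧ dist y (f t) = D - t := by
    intro t h
    simp only [hf]
    rw [dif_pos h]
    exact Classical.choose_spec (bex t h.1 h.2)
  refine ⟨f, ?_, ?_, ?_⟩
  · have h0 : (0:ℝ) ∈ Icc (0:ℝ) D := ⟨le_refl _, dist_nonneg⟩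
    exact (dist_eq_zero.1 (spec 0 h0).1).symm
  · have h0 : D ∈ Icc (0:ℝ) D := ⟨dist_nonneg, le_refl _⟩
    have := (spec D h0).2
    rw [sub_self] at this
    exact (dist_eq_zero.1 this).symm
  · intro s hs u hu
    obtain ⟨hz1, hz2⟩ := spec s hs
    obtain ⟨hw1, hw2⟩ := spec u hu
    set z := f s
    set w := f u
    have hFz : Ft x y z = s := by simp only [Ft, ← hd]; rw [hz1, hz2]; ring
    have hFw : Ft x y w = u := by simp only [Ft, ← hd]; rw [hw1, hw2]; ring
    have hez : ex x y z = 0 := by simp only [ex, ← hd]; rw [hz1, hz2]; ring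
    have hew : ex x y w = 0 := by simp only [ex, ← hd]; rw [hw1, hw2]; ring
    have hle := dist_up h4 x y z w
    rw [hFz, hFw, hez, hew, add_zero, add_zero] at hle
    rcases lt_trichotomy s u with hsu | hsu | hsu
    · have hge := dist_low h4 (x := x) (y := y) (z := z) (w := w)
        (by rw [hFz, hFw]; exact hsu)
      rw [hFz, hFw, hez, hew, add_zero, add_zero] at hge
      rw [abs_of_nonpos (by linarith)] at hle ⊢
      linarith
    · subst hsu
      rw [sub_self, abs_zero]
      rw [sub_self, abs_zero] at hle
      have := dist_nonneg (x := z) (y := w)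
      linarith
    · have hge := dist_low h4 (x := x) (y := y) (z := w) (w := z)
        (by rw [hFz, hFw]; exact hsu)
      rw [hFz, hFw, hez, hew, add_zero, add_zero, dist_comm w z] at hge
      rw [abs_of_nonneg (by linarith)] at hle ⊢
      linarith

/-- Cut-point lemma: a preconnected set containing `u` and `v` must contain every
point `b` lying strictly between `u` and `v`. -/
lemma cut {b u v : T} (hbet : dist u b + dist b v = dist u v)
    (hbu : b ≠ u) (hbv : b ≠ v) {K : Set T} (hK : IsPreconnected K)
    (huK : u ∈ K) (hvK : v ∈ K) (hbK : b ∉ K) : False := by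
  have hA : ∀ p a c w : T, min (gpr p a w) (gpr p w c) ≤ gpr p a c := fun p a c w =>
    hypAt h4 p a c w
  set U : Set T := {z | gpr b u z ≤ 0} with hU_def
  set V : Set T := {z | gpr b v z ≤ 0} with hV_def
  have hguv : gpr b u v = 0 := by
    simp only [gpr]
    rw [dist_comm b u, dist_comm b v] at *
    linarith [hbet]
  have cover : ∀ z, z ∈ U ∨ z ∈ V := by
    intro z
    have h := hA b u v z
    rw [hguv] at h
    rcases min_le_iff.1 h with h' | h'
    · exact Or.inl h'
    · exact Or.inr (by rw [hV_def, mem_setOf_eq, gpr_symm]; exact h')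
  have hbU : b ∈ U := by
    simp only [hU_def, mem_setOf_eq, gpr, dist_self, dist_comm u b]
    linarith
  have hbV : b ∈ V := by
    simp only [hV_def, mem_setOf_eq, gpr, dist_self, dist_comm v b]
    linarith
  have huU : u ∉ U := by
    simp only [hU_def, mem_setOf_eq, gpr, dist_self, not_le]
    have : 0 < dist b u := dist_pos.2 hbu
    linarith
  have hvV : v ∉ V := by
    simp only [hV_def, mem_setOf_eq, gpr, dist_self, not_le]
    have : 0 < dist b v := dist_pos.2 hbv
    linarith
  have huV : u ∈ V := (cover u).resolve_left huU
  have hvU : v ∈ U := (cover v).resolve_right hvV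
  -- the two sides
  set A : Set T := {z | z ∈ U ∧ z ≠ b} with hA_def
  set B : Set T := {z | z ∈ V ∧ z ∉ U} with hB_def
  have hAopen : IsOpen A := by
    rw [Metric.isOpen_iff]
    rintro z ⟨hzU, hzb⟩
    refine ⟨dist z b, dist_pos.2 hzb, fun w hw => ?_⟩
    rw [Metric.mem_ball] at hw
    have hwb : w ≠ b := by
      intro h; rw [h, dist_comm] at hw; exact lt_irrefl _ hw
    refine ⟨?_, hwb⟩
    have h := hA b u z w
    have hmin : min (gpr b u w) (gpr b w z) ≤ 0 := le_trans h hzU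
    rcases min_le_iff.1 hmin with h' | h'
    · exact h'
    · exfalso
      have h1 : dist b w + dist b z ≤ dist w z := by
        simp only [gpr] at h'; linarith
      have h2 := dist_nonneg (x := b) (y := w)
      have h3 := dist_comm w z
      have h5 := dist_comm z b
      linarith
  have hBopen : IsOpen B := by
    rw [Metric.isOpen_iff]
    rintro z ⟨hzV, hzU⟩
    have hzb : z ≠ b := fun h => hzU (h ▸ hbU)
    have hz_pos : 0 < gpr b u z := lt_of_le_of_ne (gpr_nonneg b u z)
      (fun h => hzU (le_of_eq h.symm))
    refine ⟨dist z b, dist_pos.2 hzb, fun w hw => ?_⟩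
    rw [Metric.mem_ball] at hw
    have hwU : w ∉ U := by
      intro hwU
      have h := hA b u w z
      have hmin : min (gpr b u z) (gpr b z w) ≤ 0 := le_trans h hwU
      rcases min_le_iff.1 hmin with h' | h'
      · exact absurd h' (not_le.2 hz_pos)
      · have h1 : dist b z + dist b w ≤ dist z w := by
          simp only [gpr] at h'; linarith
        have h2 := dist_nonneg (x := b) (y := w)
        have h3 := dist_comm w z
        have h5 := dist_comm z b
        linarith
    exact ⟨(cover w).resolve_left hwU, hwU⟩
  have hdisj : ∀ z, z ∈ A → z ∈ B → False := fun z hzA hzB => hzB.2 hzA.1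
  obtain ⟨z, -, hz1, hz2⟩ := hK A B hAopen hBopen
    (fun z hz => by
      by_cases hzU : z ∈ U
      · exact Or.inl ⟨hzU, fun h => hbK (h ▸ hz)⟩
      · exact Or.inr ⟨(cover z).resolve_left hzU, hzU⟩)
    ⟨v, hvK, hvU, hbv.symm⟩ ⟨u, huK, huV, huU⟩
  exact hdisj z hz1 hz2

/-- Every injective path from `x` to `y` has as range exactly the set of points
between `x` and `y`. -/
lemma path_range [CompleteSpace T] [ConnectedSpace T] {x y : T} (γ : Path x y)
    (hγ : Function.Injective γ) :
    range γ = {z | dist x z + dist z y = dist x y} := by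
  have hxy : x ≠ y := by
    intro h
    have h01 : γ 0 = γ 1 := by rw [γ.source, γ.target, h]
    have := hγ h01
    have : (0:ℝ) = 1 := congrArg Subtype.val this
    norm_num at this
  have hD : 0 < dist x y := dist_pos.2 hxy
  apply Subset.antisymm
  · -- range ⊆ between set
    rintro w ⟨c, rfl⟩
    set w := γ c with hw_def
    simp only [mem_setOf_eq]
    by_contra hne
    have hex : 0 < ex x y w := by
      have h1 := ex_nonneg x y w
      rcases lt_or_eq_of_le h1 with h | h
      · exact h
      · exfalso; apply hne
        have : dist x w + dist y w = dist x y := by simp only [ex] at h; linarith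
        rw [dist_comm w y]; linarith
    set τ := Ft x y w with hτ_def
    have hτ0 : 0 ≤ τ := by
      have := dist_triangle y x w
      rw [dist_comm y x] at this
      simp only [hτ_def, Ft]; linarith
    have hτD : τ ≤ dist x y := by
      have := dist_triangle x y w
      simp only [hτ_def, Ft]; linarith
    obtain ⟨b, hb1, hb2⟩ := between_exists h4 x y τ hτ0 hτD
    have hdxw : dist x w = τ + ex x y w := by
      rw [dist_eq_Ft_add_ex x y w, hτ_def]
    have hdyw : dist y w = dist x y - τ + ex x y w := by
      rw [dist_eq_sub_Ft x y w, hτ_def]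
    have hFb : Ft x y b = τ := by simp only [Ft]; rw [hb1, hb2]; ring
    have heb : ex x y b = 0 := by simp only [ex]; rw [hb1, hb2]; ring
    have hdwb : dist w b = ex x y w := by
      have hle := dist_up h4 x y w b
      rw [hFb, heb, hτ_def, sub_self, abs_zero] at hle
      have hge : dist x w ≤ dist x b + dist b w := dist_triangle x b w
      rw [dist_comm b w] at hge
      linarith [hdxw, hb1]
    have hbw : b ≠ w := by
      intro h
      rw [h, dist_self] at hdwb
      linarith
    -- sub-"paths"
    have hK1 : 0 < τ → ∃ s₁ ∈ Icc (0:ℝ) (c:ℝ), γ.extend s₁ = b := by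
      intro hτpos
      by_contra hcon
      push_neg at hcon
      have hKpre : IsPreconnected (γ.extend '' Icc (0:ℝ) (c:ℝ)) :=
        isPreconnected_Icc.image _ γ.continuous_extend.continuousOn
      have hxK : x ∈ γ.extend '' Icc (0:ℝ) (c:ℝ) :=
        ⟨0, ⟨le_refl _, c.2.1⟩, γ.extend_zero⟩
      have hwK : w ∈ γ.extend '' Icc (0:ℝ) (c:ℝ) := by
        refine ⟨c, ⟨c.2.1, le_refl _⟩, ?_⟩
        rw [γ.extend_apply ⟨c.2.1, c.2.2⟩, hw_def]
      have hbet : dist x b + dist b w = dist x w := by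
        rw [hb1, dist_comm b w, hdwb, hdxw]
      have hbx : b ≠ x := by
        intro h; rw [h] at hb1; rw [dist_self] at hb1; exact hτpos.ne hb1
      exact cut h4 hbet hbx hbw hKpre hxK hwK
        (fun ⟨s, hs, hgs⟩ => hcon s hs hgs)
    have hK2 : τ < dist x y → ∃ s₂ ∈ Icc (c:ℝ) 1, γ.extend s₂ = b := by
      intro hτlt
      by_contra hcon
      push_neg at hcon
      have hKpre : IsPreconnected (γ.extend '' Icc (c:ℝ) 1) :=
        isPreconnected_Icc.image _ γ.continuous_extend.continuousOn
      have hwK : w ∈ γ.extend '' Icc (c:ℝ) 1 := by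
        refine ⟨c, ⟨le_refl _, c.2.2⟩, ?_⟩
        rw [γ.extend_apply ⟨c.2.1, c.2.2⟩, hw_def]
      have hyK : y ∈ γ.extend '' Icc (c:ℝ) 1 := ⟨1, ⟨c.2.2, le_refl _⟩, γ.extend_one⟩
      have hbet : dist w b + dist b y = dist w y := by
        rw [hdwb, dist_comm b y, hb2, dist_comm w y, hdyw]
        ring
      have hby : b ≠ y := by
        intro h
        rw [h, dist_self] at hb2
        linarith
      exact cut h4 hbet hbw hby hKpre hwK hyK
        (fun ⟨s, hs, hgs⟩ => hcon s hs hgs)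
    -- injectivity of extend inside [0,1]
    have hext : ∀ s : ℝ, ∀ hs : s ∈ Icc (0:ℝ) 1, ∀ s' : ℝ, ∀ hs' : s' ∈ Icc (0:ℝ) 1,
        γ.extend s = γ.extend s' → s = s' := by
      intro s hs s' hs' h
      rw [γ.extend_apply hs, γ.extend_apply hs'] at h
      exact congrArg Subtype.val (hγ h)
    rcases eq_or_lt_of_le hτ0 with hτz | hτpos
    · -- τ = 0, b = x
      obtain ⟨s₂, hs₂, hgs₂⟩ := hK2 (by rw [← hτz]; exact hD)
      have hbx : b = x := by
        rw [← hτz] at hb1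
        exact (dist_eq_zero.1 hb1).symm
      have hs₂0 : s₂ = 0 := by
        apply hext s₂ ⟨le_trans c.2.1 hs₂.1, hs₂.2⟩ 0 ⟨le_refl _, zero_le_one⟩
        rw [hgs₂, hbx, γ.extend_zero]
      have hc0 : (c:ℝ) = 0 := le_antisymm (hs₂0 ▸ hs₂.1) c.2.1
      have hwx : w = x := by
        rw [hw_def, show c = (0 : unitInterval) from Subtype.ext hc0, γ.source]
      rw [hwx, ex_self_left] at hex
      exact lt_irrefl _ hex
    rcases eq_or_lt_of_le hτD with hτd | hτlt
    · -- τ = D, b = y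
      obtain ⟨s₁, hs₁, hgs₁⟩ := hK1 hτpos
      have hby : b = y := by
        rw [← hτd, sub_self] at hb2
        exact (dist_eq_zero.1 hb2).symm
      have hs₁1 : s₁ = 1 := by
        apply hext s₁ ⟨hs₁.1, le_trans hs₁.2 c.2.2⟩ 1 ⟨zero_le_one, le_refl _⟩
        rw [hgs₁, hby, γ.extend_one]
      have hc1 : (c:ℝ) = 1 := le_antisymm c.2.2 (hs₁1 ▸ hs₁.2)
      have hwy : w = y := by
        rw [hw_def, show c = (1 : unitInterval) from Subtype.ext hc1, γ.target]
      rw [hwy, ex_self_right] at hex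
      exact lt_irrefl _ hex
    · -- 0 < τ < D
      obtain ⟨s₁, hs₁, hgs₁⟩ := hK1 hτpos
      obtain ⟨s₂, hs₂, hgs₂⟩ := hK2 hτlt
      have heq : s₁ = s₂ := by
        apply hext s₁ ⟨hs₁.1, le_trans hs₁.2 c.2.2⟩ s₂ ⟨le_trans c.2.1 hs₂.1, hs₂.2⟩
        rw [hgs₁, hgs₂]
      have hsc : s₁ = (c:ℝ) := le_antisymm hs₁.2 (heq ▸ hs₂.1)
      have : b = w := by
        rw [← hgs₁, hsc, γ.extend_apply ⟨c.2.1, c.2.2⟩, hw_def]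
      exact hbw this
  · -- between set ⊆ range
    intro b hb
    simp only [mem_setOf_eq] at hb
    by_cases hbx : b = x
    · exact ⟨0, by rw [γ.source, hbx]⟩
    by_cases hby : b = y
    · exact ⟨1, by rw [γ.target, hby]⟩
    by_contra hbK
    exact cut h4 hb hbx hby (isPreconnected_range γ.continuous)
      ⟨0, γ.source⟩ ⟨1, γ.target⟩ hbK

end RealTreeAux



/-- Four-point condition and real trees. `d : X × X → [0,∞]` is symmetric, vanishes on
the diagonal, satisfies the triangle inequality and the four-point condition for the
Gromov product based at `0`. If the induced quotient metric space `T` (given by a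
surjection `π : X → T` with `edist (π x) (π y) = d x y`) is connected, then it is
0-hyperbolic; and being moreover complete, connected and 0-hyperbolic, it is a real
tree. -/
theorem four_point_real_tree {X : Type*} (d : X → X → ℝ≥0∞) (o : X)
    (hsymm : ∀ x y, d x y = d y x) (hdiag : ∀ x, d x x = 0)
    (htri : ∀ x y z, d x y ≤ d x z + d z y)
    (hfour : ∀ x y z,
      min ((d o x + d o z - d x z) / 2) ((d o z + d o y - d z y) / 2) ≤
        (d o x + d o y - d x y) / 2)
    (T : Type*) [MetricSpace T] (π : X → T) (hsurj : Function.Surjective π)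
    (hiso : ∀ x y, edist (π x) (π y) = d x y)
    (hconn : ConnectedSpace T) (hcomp : CompleteSpace T) :
    (∀ a b c : T,
      min ((dist (π o) a + dist (π o) c - dist a c) / 2)
          ((dist (π o) c + dist (π o) b - dist c b) / 2) ≤
        (dist (π o) a + dist (π o) b - dist a b) / 2) ∧
    IsRealTree T := by
  have hfin : ∀ u v, d u v ≠ ⊤ := fun u v => by
    rw [← hiso]; exact edist_ne_top _ _
  have hdist : ∀ u v, dist (π u) (π v) = (d u v).toReal := fun u v => by
    rw [dist_edist, hiso]
  have hle : ∀ u v, d u v ≤ d o u + d o v := fun u v => by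
    calc d u v ≤ d u o + d o v := htri u v o
    _ = d o u + d o v := by rw [hsymm u o]
  have htr : ∀ u v : X,
      ((d o u + d o v - d u v) / 2).toReal
        = (dist (π o) (π u) + dist (π o) (π v) - dist (π u) (π v)) / 2 := by
    intro u v
    rw [ENNReal.toReal_div,
      ENNReal.toReal_sub_of_le (hle u v) (ENNReal.add_ne_top.2 ⟨hfin o u, hfin o v⟩),
      ENNReal.toReal_add (hfin o u) (hfin o v), hdist o u, hdist o v, hdist u v]
    norm_num
  have hyp : ∀ a b c : T,
      min ((dist (π o) a + dist (π o) c - dist a c) / 2)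
          ((dist (π o) c + dist (π o) b - dist c b) / 2) ≤
        (dist (π o) a + dist (π o) b - dist a b) / 2 := by
    intro a b c
    obtain ⟨x, rfl⟩ := hsurj a
    obtain ⟨y, rfl⟩ := hsurj b
    obtain ⟨z, rfl⟩ := hsurj c
    have h := hfour x y z
    have hne1 : (d o x + d o z - d x z) / 2 ≠ ⊤ := by
      refine (ENNReal.div_lt_top ?_ (by norm_num)).ne
      exact ne_top_of_le_ne_top (ENNReal.add_ne_top.2 ⟨hfin o x, hfin o z⟩) tsub_le_self
    have hne2 : (d o z + d o y - d z y) / 2 ≠ ⊤ := by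
      refine (ENNReal.div_lt_top ?_ (by norm_num)).ne
      exact ne_top_of_le_ne_top (ENNReal.add_ne_top.2 ⟨hfin o z, hfin o y⟩) tsub_le_self
    have hne3 : (d o x + d o y - d x y) / 2 ≠ ⊤ := by
      refine (ENNReal.div_lt_top ?_ (by norm_num)).ne
      exact ne_top_of_le_ne_top (ENNReal.add_ne_top.2 ⟨hfin o x, hfin o y⟩) tsub_le_self
    have hmono := ENNReal.toReal_mono hne3 h
    rw [ENNReal.toReal_min hne1 hne2, htr x z, htr z y, htr x y] at hmono
    exact hmono
  refine ⟨hyp, ?_, ?_⟩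
  · intro x y
    exact RealTreeAux.exists_geod (RealTreeAux.fourpt (π o) (by exact hyp)) x y
  · intro x y γ₁ γ₂ h1 h2
    have h4 := RealTreeAux.fourpt (π o) (by exact hyp)
    rw [RealTreeAux.path_range h4 γ₁ h1, RealTreeAux.path_range h4 γ₂ h2]
end
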